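/- For every integer n ≥ 0, the sets of natural expansions of F_{2n+1} and of F_{2n+2} are finite and ν(F_{2n+1}) = ν(F_{2n+2}) = F_{2n+1}. -/

import Mathlib

/-- The golden ratio φ = (1+√5)/2. -/
noncomputable def phi : ℝ := (1 + Real.sqrt 5) / 2

/-- `a` is a finite φ-representation of the real number `x`: a finitely supported
function `a : ℤ → {0,1}` with `x = Σ_{i ∈ ℤ} a(i) · φ^i`. -/
def IsPhiRep (x : ℝ) (a : ℤ →₀ ℕ) : Prop :=
  (∀ i, a i ≤ 1) ∧ x = ∑ i ∈ a.support, (a i : ℝ) * phi ^ i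

/-- `a` is the canonical φ-representation of `x`: a finite φ-representation with
no two adjacent digits equal to 1. -/
def IsCanonRep (x : ℝ) (a : ℤ →₀ ℕ) : Prop :=
  IsPhiRep x a ∧ ∀ i : ℤ, a i * a (i + 1) = 0

/-- Given the family `d` of canonical φ-representations, `naturalSet d m` is the set
of natural expansions of `m`: finite φ-representations `a` of `m` whose minimal index
with a nonzero digit coincides with that of the canonical φ-representation `d m`. -/
def naturalSet (d : ℕ → ℤ →₀ ℕ) (m : ℕ) : Set (ℤ →₀ ℕ) :=
  {a | IsPhiRep m a ∧
    ∃ j : ℤ, (a j ≠ 0 ∧ ∀ i : ℤ, a i ≠ 0 → j ≤ i) ∧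
      (d m j ≠ 0 ∧ ∀ i : ℤ, d m i ≠ 0 → j ≤ i)}

noncomputable def psi : ℝ := (1 - Real.sqrt 5) / 2

lemma sqrt5_sq : Real.sqrt 5 ^ 2 = 5 := Real.sq_sqrt (by norm_num)
lemma sqrt5_gt : 2.2360 < Real.sqrt 5 := by
  nlinarith [sqrt5_sq, Real.sqrt_nonneg 5]
lemma sqrt5_lt : Real.sqrt 5 < 2.2361 := by
  nlinarith [sqrt5_sq, Real.sqrt_nonneg 5]

lemma phi_gt : 1.6180 < phi := by unfold phi; nlinarith [sqrt5_gt]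
lemma phi_lt : phi < 1.61806 := by unfold phi; nlinarith [sqrt5_lt]
lemma phi_pos : 0 < phi := by nlinarith [phi_gt]
lemma one_lt_phi : 1 < phi := by nlinarith [phi_gt]
lemma phi_ne_zero : phi ≠ 0 := ne_of_gt phi_pos
lemma phi_sq : phi ^ 2 = phi + 1 := by
  unfold phi; linear_combination sqrt5_sq / 4
lemma psi_sq : psi ^ 2 = psi + 1 := by
  unfold psi; linear_combination sqrt5_sq / 4
lemma phi_mul_psi : phi * psi = -1 := by
  unfold phi psi; linear_combination - sqrt5_sq / 4
lemma phi_add_psi : phi + psi = 1 := by unfold phi psi; ring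
lemma psi_neg : psi < 0 := by
  have := phi_add_psi; nlinarith [phi_gt]
lemma psi_ne_zero : psi ≠ 0 := ne_of_lt psi_neg
lemma phi_inv : phi⁻¹ = phi - 1 :=
  inv_eq_of_mul_eq_one_right (by nlinarith [phi_sq])
lemma psi_eq_neg_inv : psi = -phi⁻¹ := by
  have h := phi_mul_psi
  have h0 := phi_ne_zero
  field_simp
  linear_combination h

-- ψ as signed power of φ
lemma psi_zpow_even {i : ℤ} (h : Even i) : psi ^ i = phi ^ (-i) := by
  rw [psi_eq_neg_inv, h.neg_zpow, inv_zpow, ← zpow_neg]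
lemma psi_zpow_odd {i : ℤ} (h : Odd i) : psi ^ i = -phi ^ (-i) := by
  rw [psi_eq_neg_inv, h.neg_zpow, inv_zpow, ← zpow_neg]

lemma phi_zpow_pos (i : ℤ) : 0 < phi ^ i := zpow_pos phi_pos i
lemma phi_zpow_mono {a b : ℤ} (h : a ≤ b) : phi ^ a ≤ phi ^ b :=
  zpow_le_zpow_right₀ one_lt_phi.le h
lemma phi_zpow_lt {a b : ℤ} (h : a < b) : phi ^ a < phi ^ b :=
  zpow_lt_zpow_right₀ one_lt_phi h
lemma phi_zpow_lt_iff {a b : ℤ} : phi ^ a < phi ^ b ↔ a < b :=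
  zpow_lt_zpow_iff_right₀ one_lt_phi

lemma phi_zpow_add (a b : ℤ) : phi ^ (a + b) = phi ^ a * phi ^ b :=
  zpow_add₀ phi_ne_zero a b
lemma psi_zpow_add (a b : ℤ) : psi ^ (a + b) = psi ^ a * psi ^ b :=
  zpow_add₀ psi_ne_zero a b

-- small inverse powers of φ as linear expressions
lemma phi_zpow_sub_one (a : ℤ) : phi ^ (a - 1) = phi ^ a * (phi - 1) := by
  rw [sub_eq_add_neg, phi_zpow_add, zpow_neg, zpow_one, phi_inv]
lemma phi_zpow_sub_two (a : ℤ) : phi ^ (a - 2) = phi ^ a * (2 - phi) := by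
  have h : a - 2 = (a - 1) - 1 := by ring
  rw [h, phi_zpow_sub_one, phi_zpow_sub_one]
  nlinarith [phi_sq, phi_zpow_pos a]
lemma phi_zpow_sub_three (a : ℤ) : phi ^ (a - 3) = phi ^ a * (2 * phi - 3) := by
  have h : a - 3 = (a - 2) - 1 := by ring
  rw [h, phi_zpow_sub_one, phi_zpow_sub_two]
  nlinarith [phi_sq, phi_zpow_pos a]
lemma phi_zpow_sub_four (a : ℤ) : phi ^ (a - 4) = phi ^ a * (5 - 3 * phi) := by
  have h : a - 4 = (a - 3) - 1 := by ring
  rw [h, phi_zpow_sub_one, phi_zpow_sub_three]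
  nlinarith [phi_sq, phi_zpow_pos a]
lemma phi_zpow_sub_five (a : ℤ) : phi ^ (a - 5) = phi ^ a * (5 * phi - 8) := by
  have h : a - 5 = (a - 4) - 1 := by ring
  rw [h, phi_zpow_sub_one, phi_zpow_sub_four]
  nlinarith [phi_sq, phi_zpow_pos a]

-- Fibonacci expansions: for any root x of x^2 = x+1
lemma root_pow_fib {x : ℝ} (hx : x ^ 2 = x + 1) (k : ℕ) :
    x ^ (k + 1) = (Nat.fib (k + 1) : ℝ) * x + Nat.fib k := by
  induction k with
  | zero => simp
  | succ k ih =>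
    have : x ^ (k + 2) = x ^ (k+1) * x := by ring
    rw [this, ih, Nat.fib_add_two]
    push_cast
    nlinarith [hx]

-- F_{k+1} = x F_k + x'^k for the two roots
lemma fib_root_M1 {x x' : ℝ} (hx : x ^ 2 = x + 1) (hsum : x + x' = 1) (k : ℕ) :
    (Nat.fib (k + 1) : ℝ) = x * Nat.fib k + x' ^ k := by
  induction k with
  | zero => simp
  | succ k ih =>
    rw [Nat.fib_add_two]
    push_cast
    linear_combination (1 - x) * ih - (Nat.fib k : ℝ) * hx - x' ^ k * hsum

lemma fib_root_M2 {x x' : ℝ} (hx : x ^ 2 = x + 1) (hsum : x + x' = 1) (k : ℕ) :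
    (Nat.fib (k + 2) : ℝ) = x ^ 2 * Nat.fib k + x' ^ k := by
  have h1 := fib_root_M1 hx hsum (k + 1)
  have h2 := fib_root_M1 hx hsum k
  linear_combination h1 + x * h2 + x' ^ k * hsum


lemma root_zpow_step {x : ℝ} (hx : x ^ 2 = x + 1) (h0 : x ≠ 0) (a : ℤ) :
    x ^ (a + 2) = x ^ (a + 1) + x ^ a := by
  have h1 : x ^ (a + 2) = x ^ a * (x * x) := by
    rw [zpow_add₀ h0, show (2:ℤ) = 1 + 1 by norm_num, zpow_add₀ h0, zpow_one]
  have h2 : x ^ (a + 1) = x ^ a * x := by rw [zpow_add₀ h0, zpow_one]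
  rw [h1, h2]; linear_combination x ^ a * hx

lemma phi_zpow_step (a : ℤ) : phi ^ (a + 2) = phi ^ (a + 1) + phi ^ a :=
  root_zpow_step phi_sq phi_ne_zero a
lemma psi_zpow_step (a : ℤ) : psi ^ (a + 2) = psi ^ (a + 1) + psi ^ a :=
  root_zpow_step psi_sq psi_ne_zero a

open Finset in
lemma phi_sum_nonneg (T : Finset ℤ) : 0 ≤ ∑ i ∈ T, phi ^ i :=
  Finset.sum_nonneg fun i _ => (phi_zpow_pos i).le

open Finset in
lemma phi_sum_pos {T : Finset ℤ} (h : T.Nonempty) : 0 < ∑ i ∈ T, phi ^ i :=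
  Finset.sum_pos (fun i _ => phi_zpow_pos i) h

open Finset in
lemma phi_single_le_sum {T : Finset ℤ} {i : ℤ} (h : i ∈ T) :
    phi ^ i ≤ ∑ j ∈ T, phi ^ j :=
  Finset.single_le_sum (fun j _ => (phi_zpow_pos j).le) h

-- upper bound for sums of φ-powers with indices ≤ M
lemma phi_sum_lt (T : Finset ℤ) : ∀ M : ℤ, (∀ i ∈ T, i ≤ M) →
    ∑ i ∈ T, phi ^ i < phi ^ (M + 2) := by
  induction T using Finset.strongInduction with
  | _ T ih =>
    intro M h
    rcases T.eq_empty_or_nonempty with rfl | hne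
    · simpa using phi_zpow_pos (M + 2)
    · set m := T.max' hne with hm
      have hmM : m ≤ M := h m (T.max'_mem hne)
      have hsub : T.erase m ⊂ T := Finset.erase_ssubset (T.max'_mem hne)
      have hrec := ih (T.erase m) hsub (m - 1) (by
        intro i hi
        have h1 := Finset.mem_erase.mp hi
        have h2 := Finset.le_max' T i h1.2
        omega)
      have hsum : ∑ i ∈ T.erase m, phi ^ i + phi ^ m = ∑ i ∈ T, phi ^ i :=
        Finset.sum_erase_add T _ (T.max'_mem hne)
      have h3 : phi ^ (m - 1 + 2) + phi ^ m = phi ^ (m + 2) := by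
        have e2 : m - 1 + 2 = m + 1 := by ring
        rw [e2, phi_zpow_step]
      calc ∑ i ∈ T, phi ^ i = ∑ i ∈ T.erase m, phi ^ i + phi ^ m := hsum.symm
        _ < phi ^ (m - 1 + 2) + phi ^ m := by linarith [hrec]
        _ = phi ^ (m + 2) := h3
        _ ≤ phi ^ (M + 2) := phi_zpow_mono (by omega)

lemma psi_tail (T : Finset ℤ) : ∀ k : ℤ, (∀ i ∈ T, k ≤ i) →
    (-(if Even k then phi ^ (-k) else phi ^ (1 - k)) < ∑ i ∈ T, psi ^ i) ∧
    (∑ i ∈ T, psi ^ i < if Even k then phi ^ (1 - k) else phi ^ (-k)) := by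
  induction T using Finset.strongInduction with
  | _ T ih =>
    intro k hk
    rcases T.eq_empty_or_nonempty with rfl | hne
    · have p1 : (0:ℝ) < if Even k then phi ^ (-k) else phi ^ (1 - k) := by
        split <;> exact phi_zpow_pos _
      have p2 : (0:ℝ) < if Even k then phi ^ (1 - k) else phi ^ (-k) := by
        split <;> exact phi_zpow_pos _
      simp only [Finset.sum_empty]
      constructor <;> linarith
    · set m := T.min' hne with hm
      have hmem : m ∈ T := T.min'_mem hne
      have hkm : k ≤ m := hk m hmem
      have hsub : T.erase m ⊂ T := Finset.erase_ssubset hmem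
      have hrec := ih (T.erase m) hsub (m + 1) (by
        intro i hi
        have h1 := Finset.mem_erase.mp hi
        have h2 := T.min'_le i h1.2
        omega)
      have hsum : ∑ i ∈ T.erase m, psi ^ i + psi ^ m = ∑ i ∈ T, psi ^ i :=
        Finset.sum_erase_add T _ hmem
      have hstep : phi ^ (1 - m) = phi ^ (-m) + phi ^ (-m - 1) := by
        have := phi_zpow_step (-m - 1)
        have e1 : -m - 1 + 2 = 1 - m := by ring
        have e2 : -m - 1 + 1 = -m := by ring
        rw [e1, e2] at this
        exact this
      rcases Int.even_or_odd m with hem | hom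
      · -- m even
        have hpsim : psi ^ m = phi ^ (-m) := psi_zpow_even hem
        have hm1 : ¬ Even (m + 1) := by
          rcases hem with ⟨r, hr⟩
          intro ⟨s, hs⟩; omega
        rw [if_neg hm1, if_neg hm1] at hrec
        have hup : ∑ i ∈ T.erase m, psi ^ i < phi ^ (-(m + 1)) := hrec.2
        have hlo : -phi ^ (1 - (m + 1)) < ∑ i ∈ T.erase m, psi ^ i := hrec.1
        have e3 : -(m + 1) = -m - 1 := by ring
        have e4 : 1 - (m + 1) = -m := by ring
        rw [e3] at hup; rw [e4] at hlo
        have hTup : ∑ i ∈ T, psi ^ i < phi ^ (1 - m) := by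
          rw [← hsum, hpsim, hstep]; linarith
        have hTlo : 0 < ∑ i ∈ T, psi ^ i := by
          rw [← hsum, hpsim]; linarith
        rcases Int.even_or_odd k with hek | hok
        · rw [if_pos hek, if_pos hek]
          constructor
          · linarith [phi_zpow_pos (-k)]
          · exact lt_of_lt_of_le hTup (phi_zpow_mono (by omega))
        · rw [if_neg (by simpa [Int.not_even_iff_odd] using hok),
              if_neg (by simpa [Int.not_even_iff_odd] using hok)]
          have hk1 : k + 1 ≤ m := by
            rcases hem with ⟨r, hr⟩; rcases hok with ⟨s, hs⟩; omega
          constructor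
          · linarith [phi_zpow_pos (1 - k)]
          · exact lt_of_lt_of_le hTup (phi_zpow_mono (by omega))
      · -- m odd
        have hpsim : psi ^ m = -phi ^ (-m) := psi_zpow_odd hom
        have hm1 : Even (m + 1) := by
          rcases hom with ⟨r, hr⟩; exact ⟨r + 1, by omega⟩
        rw [if_pos hm1, if_pos hm1] at hrec
        have hup : ∑ i ∈ T.erase m, psi ^ i < phi ^ (1 - (m + 1)) := hrec.2
        have hlo : -phi ^ (-(m + 1)) < ∑ i ∈ T.erase m, psi ^ i := hrec.1
        have e3 : -(m + 1) = -m - 1 := by ring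
        have e4 : 1 - (m + 1) = -m := by ring
        rw [e3] at hlo; rw [e4] at hup
        have hTup : ∑ i ∈ T, psi ^ i < 0 := by
          rw [← hsum, hpsim]; linarith
        have hTlo : -phi ^ (1 - m) < ∑ i ∈ T, psi ^ i := by
          rw [← hsum, hpsim, hstep]; linarith
        rcases Int.even_or_odd k with hek | hok
        · rw [if_pos hek, if_pos hek]
          have hk1 : k + 1 ≤ m := by
            rcases hom with ⟨r, hr⟩; rcases hek with ⟨s, hs⟩; omega
          constructor
          · have : phi ^ (1 - m) ≤ phi ^ (-k) := phi_zpow_mono (by omega)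
            linarith
          · linarith [phi_zpow_pos (1 - k)]
        · rw [if_neg (by simpa [Int.not_even_iff_odd] using hok),
              if_neg (by simpa [Int.not_even_iff_odd] using hok)]
          constructor
          · have : phi ^ (1 - m) ≤ phi ^ (1 - k) := phi_zpow_mono (by omega)
            linarith
          · linarith [phi_zpow_pos (-k)]

lemma psi_tail_lt_even {T : Finset ℤ} {k : ℤ} (hpar : Even k)
    (h : ∀ i ∈ T, k ≤ i) : ∑ i ∈ T, psi ^ i < phi ^ (1 - k) := by
  have := (psi_tail T k h).2; rwa [if_pos hpar] at this
lemma psi_tail_gt_even {T : Finset ℤ} {k : ℤ} (hpar : Even k)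
    (h : ∀ i ∈ T, k ≤ i) : -phi ^ (-k) < ∑ i ∈ T, psi ^ i := by
  have := (psi_tail T k h).1; rwa [if_pos hpar] at this
lemma psi_tail_lt_odd {T : Finset ℤ} {k : ℤ} (hpar : Odd k)
    (h : ∀ i ∈ T, k ≤ i) : ∑ i ∈ T, psi ^ i < phi ^ (-k) := by
  have := (psi_tail T k h).2
  rwa [if_neg (by simpa [Int.not_even_iff_odd] using hpar)] at this
lemma psi_tail_gt_odd {T : Finset ℤ} {k : ℤ} (hpar : Odd k)
    (h : ∀ i ∈ T, k ≤ i) : -phi ^ (1 - k) < ∑ i ∈ T, psi ^ i := by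
  have := (psi_tail T k h).1
  rwa [if_neg (by simpa [Int.not_even_iff_odd] using hpar)] at this

-- conjugation: a φ-power sum that is rational has equal ψ-power sum
lemma root_zpow_rat (i : ℤ) : ∃ p q : ℚ,
    phi ^ i = p + q * Real.sqrt 5 ∧ psi ^ i = p - q * Real.sqrt 5 := by
  induction i using Int.induction_on with
  | zero => exact ⟨1, 0, by norm_num, by norm_num⟩
  | succ k ih =>
    obtain ⟨p, q, h1, h2⟩ := ih
    refine ⟨(p + 5 * q) / 2, (p + q) / 2, ?_, ?_⟩
    · have : phi ^ ((k : ℤ) + 1) = phi ^ (k : ℤ) * phi := by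
        rw [phi_zpow_add, zpow_one]
      rw [this, h1]
      unfold phi
      push_cast
      linear_combination (q / 2 : ℝ) * sqrt5_sq
    · have : psi ^ ((k : ℤ) + 1) = psi ^ (k : ℤ) * psi := by
        rw [psi_zpow_add, zpow_one]
      rw [this, h2]
      unfold psi
      push_cast
      linear_combination (q / 2 : ℝ) * sqrt5_sq
  | pred k ih =>
    obtain ⟨p, q, h1, h2⟩ := ih
    refine ⟨(-p + 5 * q) / 2, (p - q) / 2, ?_, ?_⟩
    · have e : phi⁻¹ = (-1 + Real.sqrt 5) / 2 := by
        rw [phi_inv]; unfold phi; ring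
      have : phi ^ (-(k : ℤ) - 1) = phi ^ (-(k : ℤ)) * phi⁻¹ := by
        rw [sub_eq_add_neg, phi_zpow_add, zpow_neg_one]
      rw [this, h1, e]
      push_cast
      linear_combination (q / 2 : ℝ) * sqrt5_sq
    · have e : psi⁻¹ = (-1 - Real.sqrt 5) / 2 := by
        have h0 : psi * ((-1 - Real.sqrt 5) / 2) = 1 := by
          unfold psi; linear_combination sqrt5_sq / 4
        exact inv_eq_of_mul_eq_one_right h0
      have : psi ^ (-(k : ℤ) - 1) = psi ^ (-(k : ℤ)) * psi⁻¹ := by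
        rw [sub_eq_add_neg, psi_zpow_add, zpow_neg_one]
      rw [this, h2, e]
      push_cast
      linear_combination (q / 2 : ℝ) * sqrt5_sq

lemma sum_root_rat (T : Finset ℤ) : ∃ p q : ℚ,
    (∑ i ∈ T, phi ^ i) = p + q * Real.sqrt 5 ∧
    (∑ i ∈ T, psi ^ i) = p - q * Real.sqrt 5 := by
  induction T using Finset.cons_induction with
  | empty => exact ⟨0, 0, by norm_num, by norm_num⟩
  | cons a T ha ih =>
    obtain ⟨p, q, h1, h2⟩ := ih
    obtain ⟨p', q', h1', h2'⟩ := root_zpow_rat a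
    refine ⟨p + p', q + q', ?_, ?_⟩
    · rw [Finset.sum_cons, h1, h1']; push_cast; ring
    · rw [Finset.sum_cons, h2, h2']; push_cast; ring

lemma irrational_sqrt5 : Irrational (Real.sqrt 5) := by
  have : (5 : ℝ) = ((5 : ℕ) : ℝ) := by norm_num
  rw [this]
  exact (by norm_num : Nat.Prime 5).irrational_sqrt

lemma sum_psi_of_sum_phi (T : Finset ℤ) (m : ℚ)
    (h : (∑ i ∈ T, phi ^ i) = (m : ℝ)) : (∑ i ∈ T, psi ^ i) = (m : ℝ) := by
  obtain ⟨p, q, h1, h2⟩ := sum_root_rat T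
  have hq : q = 0 := by
    by_contra hq
    have : Real.sqrt 5 = ((m - p) / q : ℚ) := by
      push_cast
      rw [h1] at h
      have hq' : (q : ℝ) ≠ 0 := by exact_mod_cast hq
      field_simp
      linarith [h]
    exact irrational_sqrt5 ⟨(m - p) / q, this.symm⟩
  have hp : (p : ℝ) = m := by
    rw [h1, hq] at h; push_cast at h; linarith
  rw [h2, hq]; push_cast; linarith

def RSet (v w : ℝ) (k : ℤ) : Set (Finset ℤ) :=
  {S | (∀ i ∈ S, k ≤ i) ∧ (∑ i ∈ S, phi ^ i) = v ∧ (∑ i ∈ S, psi ^ i) = w}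
def ESet (v w : ℝ) (k : ℤ) : Set (Finset ℤ) :=
  {S | S ∈ RSet v w k ∧ k ∈ S}
def WSet (v w : ℝ) (k : ℤ) : Set (Finset ℤ) :=
  {S | S ∈ ESet v w k ∧ (k + 1) ∈ S}

lemma RSet_finite (v w : ℝ) (k : ℤ) : (RSet v w k).Finite := by
  rcases le_or_gt v 0 with hv | hv
  · apply Set.Finite.subset (Set.finite_singleton (∅ : Finset ℤ))
    intro S hS
    rcases S.eq_empty_or_nonempty with rfl | hne
    · simp
    · exfalso
      have := phi_sum_pos hne
      rw [hS.2.1] at this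
      linarith
  · obtain ⟨M, hM⟩ := pow_unbounded_of_one_lt v one_lt_phi
    apply Set.Finite.subset (Finset.Icc k (M : ℤ)).powerset.finite_toSet
    intro S hS
    simp only [Finset.coe_powerset, Set.mem_preimage, Set.mem_powerset_iff,
      Finset.coe_subset, Finset.mem_coe]
    intro i hi
    rw [Finset.mem_Icc]
    refine ⟨hS.1 i hi, ?_⟩
    have h1 : phi ^ i ≤ v := by
      rw [← hS.2.1]; exact phi_single_le_sum hi
    have h2 : phi ^ i < phi ^ (M : ℤ) := by
      calc phi ^ i ≤ v := h1
        _ < phi ^ M := hM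
        _ = phi ^ (M : ℤ) := (zpow_natCast phi M).symm
    exact le_of_lt (phi_zpow_lt_iff.mp h2)

lemma ESet_subset (v w : ℝ) (k : ℤ) : ESet v w k ⊆ RSet v w k := fun _ h => h.1
lemma WSet_subset (v w : ℝ) (k : ℤ) : WSet v w k ⊆ ESet v w k := fun _ h => h.1
lemma ESet_finite (v w : ℝ) (k : ℤ) : (ESet v w k).Finite :=
  (RSet_finite v w k).subset (ESet_subset v w k)
lemma WSet_finite (v w : ℝ) (k : ℤ) : (WSet v w k).Finite :=
  (ESet_finite v w k).subset (WSet_subset v w k)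

lemma ncard_of_bijOn {f : Finset ℤ → Finset ℤ} {s t : Set (Finset ℤ)}
    (h : Set.BijOn f s t) : s.ncard = t.ncard := by
  rw [← h.image_eq]
  exact (Set.ncard_image_of_injOn h.injOn).symm

-- splitting
lemma RSet_split (v w : ℝ) (k : ℤ) :
    (RSet v w k).ncard = (ESet v w k).ncard + (RSet v w (k + 1)).ncard := by
  have hu : RSet v w k = ESet v w k ∪ RSet v w (k + 1) := by
    ext S
    constructor
    · intro hS
      by_cases hk : k ∈ S
      · exact Or.inl ⟨hS, hk⟩
      · refine Or.inr ⟨fun i hi => ?_, hS.2.1, hS.2.2⟩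
        have := hS.1 i hi
        have : i ≠ k := fun h => hk (h ▸ hi)
        omega
    · rintro (hS | hS)
      · exact hS.1
      · exact ⟨fun i hi => by have := hS.1 i hi; omega, hS.2.1, hS.2.2⟩
  have hd : Disjoint (ESet v w k) (RSet v w (k + 1)) := by
    rw [Set.disjoint_left]
    intro S hS hS'
    have := hS'.1 k hS.2
    omega
  rw [hu, Set.ncard_union_eq hd (ESet_finite v w k) (RSet_finite v w (k + 1))]

lemma ESet_split (v w : ℝ) (k : ℤ) :
    (ESet v w k).ncard = (WSet v w k).ncard + (ESet v w k \ WSet v w k).ncard := by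
  have hu : ESet v w k = WSet v w k ∪ (ESet v w k \ WSet v w k) := by
    rw [Set.union_diff_cancel (WSet_subset v w k)]
  have hd : Disjoint (WSet v w k) (ESet v w k \ WSet v w k) :=
    Set.disjoint_sdiff_right.mono_left le_rfl
  conv_lhs => rw [hu]
  rw [Set.ncard_union_eq hd (WSet_finite v w k)
    ((ESet_finite v w k).subset Set.diff_subset)]

-- peel bijections
lemma peel_E (v w v' w' : ℝ) (k : ℤ) (hv : v' = v - phi ^ k) (hw : w' = w - psi ^ k) :
    Set.BijOn (fun S => Finset.erase S k) (ESet v w k) (RSet v' w' (k + 1)) := by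
  subst hv hw
  refine ⟨?_, ?_, ?_⟩
  · rintro S ⟨⟨hb, hφ, hψ⟩, hk⟩
    refine ⟨?_, ?_, ?_⟩
    · intro i hi
      have h1 := Finset.mem_erase.mp hi
      have := hb i h1.2
      omega
    · have := Finset.sum_erase_add S (fun i => phi ^ i) hk
      linarith [this, hφ]
    · have := Finset.sum_erase_add S (fun i => psi ^ i) hk
      linarith [this, hψ]
  · intro S hS T hT h
    have h' : S.erase k = T.erase k := h
    have : insert k (S.erase k) = insert k (T.erase k) := by rw [h']
    rwa [Finset.insert_erase hS.2, Finset.insert_erase hT.2] at this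
  · intro T hT
    have hknotin : k ∉ T := fun h => by have := hT.1 k h; omega
    refine ⟨insert k T, ⟨⟨?_, ?_, ?_⟩, Finset.mem_insert_self k T⟩, ?_⟩
    · intro i hi
      rcases Finset.mem_insert.mp hi with rfl | hi
      · omega
      · have := hT.1 i hi; omega
    · rw [Finset.sum_insert hknotin, hT.2.1]; ring
    · rw [Finset.sum_insert hknotin, hT.2.2]; ring
    · show (insert k T).erase k = T
      exact Finset.erase_insert hknotin

lemma peel_W (v w v' w' : ℝ) (k : ℤ) (hv : v' = v - phi ^ k) (hw : w' = w - psi ^ k) :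
    Set.BijOn (fun S => Finset.erase S k) (WSet v w k) (ESet v' w' (k + 1)) := by
  subst hv hw
  have hbase := peel_E v w _ _ k rfl rfl
  refine ⟨?_, ?_, ?_⟩
  · rintro S ⟨hSE, hk1⟩
    refine ⟨hbase.mapsTo hSE, ?_⟩
    exact Finset.mem_erase.mpr ⟨by omega, hk1⟩
  · exact hbase.injOn.mono (WSet_subset v _ k)
  · intro T hT
    obtain ⟨S, hS, hST⟩ := hbase.surjOn hT.1
    refine ⟨S, ⟨hS, ?_⟩, hST⟩
    have h2 : k + 1 ∈ S.erase k := by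
      rw [show S.erase k = T from hST]; exact hT.2
    exact (Finset.mem_erase.mp h2).2

lemma peel_EW (v w v' w' : ℝ) (k : ℤ) (hv : v' = v - phi ^ k) (hw : w' = w - psi ^ k) :
    Set.BijOn (fun S => Finset.erase S k) (ESet v w k \ WSet v w k) (RSet v' w' (k + 2)) := by
  subst hv hw
  have hbase := peel_E v w _ _ k rfl rfl
  refine ⟨?_, ?_, ?_⟩
  · rintro S ⟨hSE, hSW⟩
    have h1 := hbase.mapsTo hSE
    have hk1 : k + 1 ∉ S := fun h => hSW ⟨hSE, h⟩
    refine ⟨?_, h1.2.1, h1.2.2⟩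
    intro i hi
    have := h1.1 i hi
    have h2 : i ≠ k + 1 := by
      rintro rfl
      exact hk1 (Finset.mem_erase.mp hi).2
    omega
  · exact hbase.injOn.mono Set.diff_subset
  · intro T hT
    have hT' : T ∈ RSet _ _ (k + 1) :=
      ⟨fun i hi => by have := hT.1 i hi; omega, hT.2.1, hT.2.2⟩
    obtain ⟨S, hS, hST⟩ := hbase.surjOn hT'
    refine ⟨S, ⟨hS, fun hW => ?_⟩, hST⟩
    have h2 : k + 1 ∈ T := by
      rw [← show S.erase k = T from hST]
      exact Finset.mem_erase.mpr ⟨by omega, hW.2⟩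
    have := hT.1 (k + 1) h2
    omega

-- shift bijection
lemma shift_R (v w v' w' : ℝ) (k t k' : ℤ) (hv : v' = v * phi ^ t) (hw : w' = w * psi ^ t)
    (hk : k' = k + t) :
    Set.BijOn (fun S => S.image (· + t)) (RSet v w k) (RSet v' w' k') := by
  subst hv hw hk
  have hinj : Function.Injective (· + t) := add_left_injective t
  refine ⟨?_, ?_, ?_⟩
  · rintro S ⟨hb, hφ, hψ⟩
    refine ⟨?_, ?_, ?_⟩
    · intro i hi
      obtain ⟨a, ha, rfl⟩ := Finset.mem_image.mp hi
      have := hb a ha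
      omega
    · rw [Finset.sum_image (fun a _ b _ h => hinj h)]
      rw [← hφ, Finset.sum_mul]
      exact Finset.sum_congr rfl fun i _ => (phi_zpow_add i t)
    · rw [Finset.sum_image (fun a _ b _ h => hinj h)]
      rw [← hψ, Finset.sum_mul]
      exact Finset.sum_congr rfl fun i _ => (psi_zpow_add i t)
  · intro S _ T _ h
    exact Finset.image_injective hinj h
  · intro T hT
    refine ⟨T.image (· + (-t)), ⟨?_, ?_, ?_⟩, ?_⟩
    · intro i hi
      obtain ⟨a, ha, rfl⟩ := Finset.mem_image.mp hi
      have := hT.1 a ha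
      omega
    · rw [Finset.sum_image (fun a _ b _ h => by omega)]
      have h1 : ∀ i ∈ T, phi ^ (i + (-t)) = phi ^ i * phi ^ (-t : ℤ) :=
        fun i _ => phi_zpow_add i (-t)
      rw [Finset.sum_congr rfl h1, ← Finset.sum_mul, hT.2.1]
      rw [mul_assoc, ← phi_zpow_add]
      simp
    · rw [Finset.sum_image (fun a _ b _ h => by omega)]
      have h1 : ∀ i ∈ T, psi ^ (i + (-t)) = psi ^ i * psi ^ (-t : ℤ) :=
        fun i _ => psi_zpow_add i (-t)
      rw [Finset.sum_congr rfl h1, ← Finset.sum_mul, hT.2.2]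
      rw [mul_assoc, ← psi_zpow_add]
      simp
    · show Finset.image (· + t) (T.image (· + (-t))) = T
      rw [Finset.image_image]
      have he : ((· + t) ∘ (· + (-t))) = id := by
        funext a; simp
      rw [he, Finset.image_id]

-- ncard versions
lemma ncard_peel_E (v w v' w' : ℝ) (k : ℤ) (hv : v' = v - phi ^ k) (hw : w' = w - psi ^ k) :
    (ESet v w k).ncard = (RSet v' w' (k + 1)).ncard :=
  ncard_of_bijOn (peel_E v w v' w' k hv hw)
lemma ncard_peel_W (v w v' w' : ℝ) (k : ℤ) (hv : v' = v - phi ^ k) (hw : w' = w - psi ^ k) :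
    (WSet v w k).ncard = (ESet v' w' (k + 1)).ncard :=
  ncard_of_bijOn (peel_W v w v' w' k hv hw)
lemma ncard_peel_EW (v w v' w' : ℝ) (k : ℤ) (hv : v' = v - phi ^ k) (hw : w' = w - psi ^ k) :
    (ESet v w k \ WSet v w k).ncard = (RSet v' w' (k + 2)).ncard :=
  ncard_of_bijOn (peel_EW v w v' w' k hv hw)
lemma ncard_shift (v w v' w' : ℝ) (k t k' : ℤ) (hv : v' = v * phi ^ t) (hw : w' = w * psi ^ t)
    (hk : k' = k + t) : (RSet v w k).ncard = (RSet v' w' k').ncard :=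
  ncard_of_bijOn (shift_R v w v' w' k t k' hv hw hk)

-- signed powers at shifted indices
lemma psi_at0 {e : ℤ} (he : e % 2 = 0) : psi ^ (-e) = phi ^ e := by
  rw [psi_zpow_even (by rw [Int.even_iff]; omega), neg_neg]
lemma psi_at1 {e : ℤ} (he : e % 2 = 0) : psi ^ (-e + 1) = -phi ^ (e - 1) := by
  rw [psi_zpow_odd (by rw [Int.odd_iff]; omega), show -(-e+1) = e - 1 by ring]
lemma psi_at2 {e : ℤ} (he : e % 2 = 0) : psi ^ (-e + 2) = phi ^ (e - 2) := by
  rw [psi_zpow_even (by rw [Int.even_iff]; omega), show -(-e+2) = e - 2 by ring]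
lemma psi_at3 {e : ℤ} (he : e % 2 = 0) : psi ^ (-e + 3) = -phi ^ (e - 3) := by
  rw [psi_zpow_odd (by rw [Int.odd_iff]; omega), show -(-e+3) = e - 3 by ring]
lemma psi_at4 {e : ℤ} (he : e % 2 = 0) : psi ^ (-e + 4) = phi ^ (e - 4) := by
  rw [psi_zpow_even (by rw [Int.even_iff]; omega), show -(-e+4) = e - 4 by ring]
lemma psi_at5 {e : ℤ} (he : e % 2 = 0) : psi ^ (-e + 5) = -phi ^ (e - 5) := by
  rw [psi_zpow_odd (by rw [Int.odd_iff]; omega), show -(-e+5) = e - 5 by ring]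

-- the φ-power expansion
lemma phi_exp_fib (n : ℕ) :
    phi ^ (2 * (n:ℤ) + 2) = (Nat.fib (2*n+2) : ℝ) * phi + Nat.fib (2*n+1) := by
  have h1 : (2 * (n:ℤ) + 2) = ((2*n+2 : ℕ) : ℤ) := by push_cast; ring
  rw [h1, zpow_natCast]
  exact root_pow_fib phi_sq (2*n+1)

lemma fib_even_real (n : ℕ) :
    (Nat.fib (2*n+2) : ℝ) = Nat.fib (2*n+1) + Nat.fib (2*n) := by
  rw [Nat.fib_add_two]; push_cast; ring

lemma fib_mono_real (n : ℕ) : (Nat.fib (2*n) : ℝ) ≤ Nat.fib (2*n+1) := by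
  exact_mod_cast Nat.fib_mono (by omega)

lemma fib_nonneg_real (m : ℕ) : (0:ℝ) ≤ Nat.fib m := by positivity

lemma phi_ge : (3:ℝ)/2 ≤ phi := by nlinarith [phi_gt]
lemma phi_le : phi ≤ (5:ℝ)/3 := by nlinarith [phi_lt]
lemma phi_le_two : phi ≤ 2 := by nlinarith [phi_lt]

-- J inequalities (e = 2n+2)
lemma J1 (n : ℕ) : phi ^ (2*(n:ℤ)) ≤ (Nat.fib (2*n+2) : ℝ) := by
  have h := fib_root_M2 psi_sq (by linarith [phi_add_psi] : psi + phi = 1) (2*n)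
  have h2 : phi ^ (2*(n:ℤ)) = phi ^ (2*n : ℕ) := by
    rw [show (2*(n:ℤ)) = ((2*n:ℕ):ℤ) by push_cast; ring, zpow_natCast]
  rw [h2, h]
  nlinarith [sq_nonneg psi, fib_nonneg_real (2*n)]

lemma J2 (n : ℕ) : (Nat.fib (2*n+3) : ℝ) ≤ phi ^ (2*(n:ℤ)+2) := by
  have hu := phi_exp_fib n
  have hb := fib_even_real n
  have h3 : (Nat.fib (2*n+3) : ℝ) = Nat.fib (2*n+2) + Nat.fib (2*n+1) := by
    rw [show 2*n+3 = (2*n+1)+2 by ring, Nat.fib_add_two]; push_cast; ring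
  rw [h3, hu]
  nlinarith [fib_nonneg_real (2*n+2), one_lt_phi]

lemma J3 (n : ℕ) :
    (Nat.fib (2*n+3) : ℝ) ≤ phi ^ (2*(n:ℤ)+2) - phi ^ (2*(n:ℤ)+2-4) := by
  have hu := phi_exp_fib n
  have hb := fib_even_real n
  have h3 : (Nat.fib (2*n+3) : ℝ) = Nat.fib (2*n+2) + Nat.fib (2*n+1) := by
    rw [show 2*n+3 = (2*n+1)+2 by ring, Nat.fib_add_two]; push_cast; ring
  rw [h3, phi_zpow_sub_four, hu]
  nlinarith [fib_mono_real n, fib_nonneg_real (2*n), phi_ge, phi_le, phi_sq,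
    mul_nonneg (sub_nonneg.2 (fib_mono_real n)) (sub_nonneg.2 phi_ge),
    mul_nonneg (fib_nonneg_real (2*n)) (sub_nonneg.2 phi_ge)]

lemma J4 (n : ℕ) :
    (Nat.fib (2*n+3) : ℝ) ≤ phi ^ (2*(n:ℤ)+2) - phi ^ (2*(n:ℤ)+2-3) := by
  have hu := phi_exp_fib n
  have hb := fib_even_real n
  have h3 : (Nat.fib (2*n+3) : ℝ) = Nat.fib (2*n+2) + Nat.fib (2*n+1) := by
    rw [show 2*n+3 = (2*n+1)+2 by ring, Nat.fib_add_two]; push_cast; ring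
  rw [h3, phi_zpow_sub_three, hu]
  nlinarith [fib_mono_real n, fib_nonneg_real (2*n), phi_ge, phi_le, phi_sq,
    mul_nonneg (sub_nonneg.2 (fib_mono_real n)) (sub_nonneg.2 phi_ge),
    mul_nonneg (fib_nonneg_real (2*n)) (sub_nonneg.2 phi_ge)]

lemma J5 (n : ℕ) :
    phi ^ (2*(n:ℤ)+2) - phi ^ (2*(n:ℤ)+2-1) + phi ^ (2*(n:ℤ)+2-3)
      ≤ (Nat.fib (2*n+3) : ℝ) := by
  have hu := phi_exp_fib n
  have hb := fib_even_real n
  have h3 : (Nat.fib (2*n+3) : ℝ) = Nat.fib (2*n+2) + Nat.fib (2*n+1) := by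
    rw [show 2*n+3 = (2*n+1)+2 by ring, Nat.fib_add_two]; push_cast; ring
  rw [h3, phi_zpow_sub_one, phi_zpow_sub_three, hu]
  nlinarith [fib_nonneg_real (2*n+1), phi_le_two, phi_sq,
    mul_nonneg (fib_nonneg_real (2*n+1)) (sub_nonneg.2 (by linarith [phi_le_two] : phi ≤ 2))]

lemma J7 (n : ℕ) :
    phi ^ (2*(n:ℤ)+2) - phi ^ (2*(n:ℤ)+2-1) + phi ^ (2*(n:ℤ)+2-2)
      - phi ^ (2*(n:ℤ)+2-3) + phi ^ (2*(n:ℤ)+2-4) ≤ (Nat.fib (2*n+3) : ℝ) := by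
  have hu := phi_exp_fib n
  have hb := fib_even_real n
  have h3 : (Nat.fib (2*n+3) : ℝ) = Nat.fib (2*n+2) + Nat.fib (2*n+1) := by
    rw [show 2*n+3 = (2*n+1)+2 by ring, Nat.fib_add_two]; push_cast; ring
  rw [h3, phi_zpow_sub_one, phi_zpow_sub_two, phi_zpow_sub_three, phi_zpow_sub_four, hu]
  nlinarith [phi_sq, fib_mono_real n, fib_nonneg_real (2*n),
    mul_nonneg (fib_nonneg_real (2*n)) (sub_nonneg.2 phi_le),
    mul_nonneg (sub_nonneg.2 (fib_mono_real n)) (sub_nonneg.2 phi_ge),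
    mul_nonneg (fib_nonneg_real (2*n)) (sub_nonneg.2 phi_ge),
    mul_nonneg (sub_nonneg.2 (fib_mono_real n)) (sub_nonneg.2 phi_le)]

-- emptiness criteria
lemma RSet_empty_odd_up {v w : ℝ} {k : ℤ} (hodd : Odd k) (hw : phi ^ (-k) ≤ w) :
    RSet v w k = ∅ := by
  ext S
  simp only [Set.mem_empty_iff_false, iff_false]
  rintro ⟨hb, _, hψ⟩
  have := psi_tail_lt_odd hodd hb
  rw [hψ] at this
  linarith

lemma RSet_empty_odd_lo {v w : ℝ} {k : ℤ} (hodd : Odd k) (hw : w ≤ -phi ^ (1 - k)) :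
    RSet v w k = ∅ := by
  ext S
  simp only [Set.mem_empty_iff_false, iff_false]
  rintro ⟨hb, _, hψ⟩
  have := psi_tail_gt_odd hodd hb
  rw [hψ] at this
  linarith

lemma RSet_empty_even_up {v w : ℝ} {k : ℤ} (heven : Even k) (hw : phi ^ (1 - k) ≤ w) :
    RSet v w k = ∅ := by
  ext S
  simp only [Set.mem_empty_iff_false, iff_false]
  rintro ⟨hb, _, hψ⟩
  have := psi_tail_lt_even heven hb
  rw [hψ] at this
  linarith

lemma RSet_empty_even_lo {v w : ℝ} {k : ℤ} (heven : Even k) (hw : w ≤ -phi ^ (-k)) :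
    RSet v w k = ∅ := by
  ext S
  simp only [Set.mem_empty_iff_false, iff_false]
  rintro ⟨hb, _, hψ⟩
  have := psi_tail_gt_even heven hb
  rw [hψ] at this
  linarith

lemma ESet_empty_of {v w : ℝ} {k : ℤ}
    (h : RSet (v - phi ^ k) (w - psi ^ k) (k + 1) = ∅) : ESet v w k = ∅ := by
  ext S
  simp only [Set.mem_empty_iff_false, iff_false]
  intro hS
  have := (peel_E v w _ _ k rfl rfl).mapsTo hS
  rw [h] at this
  exact this

section Xlemmas
variable (n : ℕ)

private lemma epar : (2*(n:ℤ)+2) % 2 = 0 := by omega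
private lemma epar' : (2*(n:ℤ)) % 2 = 0 := by omega

lemma X1 (v : ℝ) :
    ESet v ((Nat.fib (2*n+2) : ℝ) - phi ^ (2*(n:ℤ))) (-(2*(n:ℤ)) + 1) = ∅ := by
  set e : ℤ := 2*(n:ℤ) with he
  apply ESet_empty_of
  rw [psi_at1 (epar' n)]
  apply RSet_empty_even_up (by rw [Int.even_iff]; omega)
  rw [show (1 - (-e + 1 + 1)) = e - 1 by ring]
  have := J1 n
  linarith

lemma X2 (v : ℝ) :
    ESet v ((Nat.fib (2*n+3) : ℝ) - phi ^ (2*(n:ℤ)+2)) (-(2*(n:ℤ)+2) + 2) = ∅ := by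
  set e : ℤ := 2*(n:ℤ)+2 with he
  apply ESet_empty_of
  rw [psi_at2 (epar n)]
  apply RSet_empty_odd_lo (by rw [Int.odd_iff]; omega)
  rw [show (1 - (-e + 2 + 1)) = e - 2 by ring]
  have := J2 n
  linarith

lemma X3 (v : ℝ) :
    RSet v ((Nat.fib (2*n+3) : ℝ) - phi ^ (2*(n:ℤ)+2)) (-(2*(n:ℤ)+2) + 4) = ∅ := by
  set e : ℤ := 2*(n:ℤ)+2 with he
  apply RSet_empty_even_lo (by rw [Int.even_iff]; omega)
  rw [show (-(-e + 4)) = e - 4 by ring]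
  have := J3 n
  linarith

lemma X4 (v : ℝ) :
    ESet v ((Nat.fib (2*n+3) : ℝ) - phi ^ (2*(n:ℤ)+2) + phi ^ (2*(n:ℤ)+2-3))
      (-(2*(n:ℤ)+2) + 4) = ∅ := by
  set e : ℤ := 2*(n:ℤ)+2 with he
  apply ESet_empty_of
  rw [psi_at4 (epar n)]
  apply RSet_empty_odd_lo (by rw [Int.odd_iff]; omega)
  rw [show (1 - (-e + 4 + 1)) = e - 4 by ring]
  have := J4 n
  linarith

lemma X5 (v : ℝ) :
    RSet v ((Nat.fib (2*n+3) : ℝ) - phi ^ (2*(n:ℤ)+2) + phi ^ (2*(n:ℤ)+2-1))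
      (-(2*(n:ℤ)+2) + 3) = ∅ := by
  set e : ℤ := 2*(n:ℤ)+2 with he
  apply RSet_empty_odd_up (by rw [Int.odd_iff]; omega)
  rw [show (-(-e + 3)) = e - 3 by ring]
  have := J5 n
  linarith

lemma X6 (v : ℝ) :
    RSet v ((Nat.fib (2*n+3) : ℝ) - phi ^ (2*(n:ℤ)+2) + phi ^ (2*(n:ℤ)+2-1)
      - phi ^ (2*(n:ℤ)+2-2) + phi ^ (2*(n:ℤ)+2-3)) (-(2*(n:ℤ)+2) + 5) = ∅ := by
  set e : ℤ := 2*(n:ℤ)+2 with he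
  apply RSet_empty_odd_up (by rw [Int.odd_iff]; omega)
  rw [show (-(-e + 5)) = e - 5 by ring]
  have hJ := J5 n
  -- identity: phi^(e-2) - 2 phi^(e-3) + phi^(e-5) = 0
  have hid : phi ^ (e-2) - 2 * phi ^ (e-3) + phi ^ (e-5) = 0 := by
    rw [phi_zpow_sub_two, phi_zpow_sub_three, phi_zpow_sub_five]
    ring
  linarith

lemma X7 (v : ℝ) :
    ESet v ((Nat.fib (2*n+3) : ℝ) - phi ^ (2*(n:ℤ)+2) + phi ^ (2*(n:ℤ)+2-1)
      - phi ^ (2*(n:ℤ)+2-2) + phi ^ (2*(n:ℤ)+2-3) - phi ^ (2*(n:ℤ)+2-4))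
      (-(2*(n:ℤ)+2) + 5) = ∅ := by
  set e : ℤ := 2*(n:ℤ)+2 with he
  apply ESet_empty_of
  rw [psi_at5 (epar n)]
  apply RSet_empty_even_up (by rw [Int.even_iff]; omega)
  rw [show (1 - (-e + 5 + 1)) = e - 5 by ring]
  have := J7 n
  linarith

lemma X8 (v : ℝ) :
    ESet v ((Nat.fib (2*n+3) : ℝ) - phi ^ (2*(n:ℤ)+2) + phi ^ (2*(n:ℤ)+2-1)
      - phi ^ (2*(n:ℤ)+2-2)) (-(2*(n:ℤ)+2) + 4) = ∅ := by
  set e : ℤ := 2*(n:ℤ)+2 with he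
  apply ESet_empty_of
  rw [psi_at4 (epar n)]
  apply RSet_empty_odd_lo (by rw [Int.odd_iff]; omega)
  rw [show (1 - (-e + 4 + 1)) = e - 4 by ring]
  have hJ := J4 n
  have hid : phi ^ (e-1) - phi ^ (e-2) - phi ^ (e-3) = 0 := by
    rw [phi_zpow_sub_one, phi_zpow_sub_two, phi_zpow_sub_three]
    ring
  linarith

end Xlemmas

lemma eq_mul_inv_of {x : ℝ} (hx : x ≠ 0) {v v' : ℝ} {t : ℤ} (h : v = v' * x ^ t) :
    v' = v * x ^ (-t) := by
  rw [h, mul_assoc, ← zpow_add₀ hx, add_neg_cancel, zpow_zero, mul_one]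

lemma phi_pow_two_cast : phi ^ (2:ℤ) = phi ^ (2:ℕ) := by
  rw [show (2:ℤ) = ((2:ℕ):ℤ) by norm_num, zpow_natCast]
lemma psi_pow_two_cast : psi ^ (2:ℤ) = psi ^ (2:ℕ) := by
  rw [show (2:ℤ) = ((2:ℕ):ℤ) by norm_num, zpow_natCast]

lemma psi_val : psi = 1 - phi := by linarith [phi_add_psi]
lemma psi_zsq : psi ^ (2:ℤ) = 2 - phi := by
  rw [psi_pow_two_cast, psi_sq, psi_val]; ring

section Keys
variable (n : ℕ)

-- j := -(2n+2), e := 2n+2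
lemma key_M2_phi :
    (Nat.fib (2*n+3) : ℝ) = phi ^ (2:ℤ) * Nat.fib (2*n+1) - phi ^ (-(2*(n:ℤ)+2)+1) := by
  have h := fib_root_M2 phi_sq phi_add_psi (2*n+1)
  have h2 : psi ^ (2*n+1 : ℕ) = -phi ^ (-(2*(n:ℤ)+2)+1) := by
    rw [← zpow_natCast psi (2*n+1), psi_zpow_odd ⟨(n:ℤ), by push_cast; ring⟩,
      show (-((2*n+1:ℕ):ℤ)) = -(2*(n:ℤ)+2)+1 by push_cast; ring]
  rw [show 2*n+3 = (2*n+1)+2 by ring, h, h2, phi_pow_two_cast]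
  ring

lemma key_M2_psi :
    (Nat.fib (2*n+3) : ℝ) = psi ^ (2:ℤ) * Nat.fib (2*n+1) + phi ^ (2*(n:ℤ)+2-1) := by
  have h := fib_root_M2 psi_sq (by linarith [phi_add_psi] : psi + phi = 1) (2*n+1)
  have h2 : phi ^ (2*n+1 : ℕ) = phi ^ (2*(n:ℤ)+2-1) := by
    rw [← zpow_natCast phi (2*n+1),
      show ((2*n+1:ℕ):ℤ) = 2*(n:ℤ)+2-1 by push_cast; ring]
  rw [show 2*n+3 = (2*n+1)+2 by ring, h, h2, psi_pow_two_cast]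

lemma key_M1_phi :
    (Nat.fib (2*n+3) : ℝ) = phi * Nat.fib (2*n+2) + phi ^ (-(2*(n:ℤ)+2)) := by
  have h := fib_root_M1 phi_sq phi_add_psi (2*n+2)
  have h2 : psi ^ (2*n+2 : ℕ) = phi ^ (-(2*(n:ℤ)+2)) := by
    rw [← zpow_natCast psi (2*n+2), psi_zpow_even ⟨(n:ℤ)+1, by push_cast; ring⟩,
      show (-((2*n+2:ℕ):ℤ)) = -(2*(n:ℤ)+2) by push_cast; ring]
  rw [show 2*n+3 = (2*n+2)+1 by ring, h, h2]

lemma key_M1_psi :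
    (Nat.fib (2*n+3) : ℝ) = psi * Nat.fib (2*n+2) + phi ^ (2*(n:ℤ)+2) := by
  have h := fib_root_M1 psi_sq (by linarith [phi_add_psi] : psi + phi = 1) (2*n+2)
  have h2 : phi ^ (2*n+2 : ℕ) = phi ^ (2*(n:ℤ)+2) := by
    rw [← zpow_natCast phi (2*n+2),
      show ((2*n+2:ℕ):ℤ) = 2*(n:ℤ)+2 by push_cast; ring]
  rw [show 2*n+3 = (2*n+2)+1 by ring, h, h2]

lemma key_M1_phi' :
    (Nat.fib (2*n+4) : ℝ) = phi * Nat.fib (2*n+3) - phi ^ (-(2*(n:ℤ)+2)-1) := by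
  have h := fib_root_M1 phi_sq phi_add_psi (2*n+3)
  have h2 : psi ^ (2*n+3 : ℕ) = -phi ^ (-(2*(n:ℤ)+2)-1) := by
    rw [← zpow_natCast psi (2*n+3), psi_zpow_odd ⟨(n:ℤ)+1, by push_cast; ring⟩,
      show (-((2*n+3:ℕ):ℤ)) = -(2*(n:ℤ)+2)-1 by push_cast; ring]
  rw [show 2*n+4 = (2*n+3)+1 by ring, h, h2]
  ring

lemma key_M1_psi' :
    (Nat.fib (2*n+4) : ℝ) = psi * Nat.fib (2*n+3) + phi ^ (2*(n:ℤ)+2+1) := by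
  have h := fib_root_M1 psi_sq (by linarith [phi_add_psi] : psi + phi = 1) (2*n+3)
  have h2 : phi ^ (2*n+3 : ℕ) = phi ^ (2*(n:ℤ)+2+1) := by
    rw [← zpow_natCast phi (2*n+3),
      show ((2*n+3:ℕ):ℤ) = 2*(n:ℤ)+2+1 by push_cast; ring]
  rw [show 2*n+4 = (2*n+3)+1 by ring, h, h2]

end Keys

section Ids
variable (n : ℕ)

-- step lemmas at specific offsets, local helper
private lemma stepAt (a : ℤ) (b c : ℤ) (hb : b = a + 1) (hc : c = a + 2) :
    phi ^ c = phi ^ b + phi ^ a := by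
  subst hb hc; exact phi_zpow_step a

private lemma prodAt (a t c : ℤ) (hc : c = a + t) :
    phi ^ a * phi ^ t = phi ^ c := by
  subst hc; exact (phi_zpow_add a t).symm

private lemma prodAt1 (a c : ℤ) (hc : c = a + 1) : phi ^ a * phi = phi ^ c := by
  subst hc
  have h := phi_zpow_add a 1
  rw [zpow_one] at h
  exact h.symm

lemma IdA_phi : (Nat.fib (2*n+3) : ℝ) - phi ^ (-(2*(n:ℤ)+2)) - phi ^ (-(2*(n:ℤ)+2)+3)
    = ((Nat.fib (2*n+1) : ℝ) - phi ^ (-(2*(n:ℤ)+2)+2)) * phi ^ (2:ℤ) := by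
  set j : ℤ := -(2*(n:ℤ)+2) with hj
  have key := key_M2_phi n
  have s1 := stepAt j (j+1) (j+2) (by ring) (by ring)
  have s2 := stepAt (j+2) (j+3) (j+4) (by ring) (by ring)
  have p := prodAt (j+2) 2 (j+4) (by ring)
  linear_combination key + p + s2 + s1

lemma IdA_psi : (Nat.fib (2*n+3) : ℝ) - phi ^ (2*(n:ℤ)+2) + phi ^ (2*(n:ℤ)+2-3)
    = ((Nat.fib (2*n+1) : ℝ) - phi ^ (2*(n:ℤ)+2-2)) * psi ^ (2:ℤ) := by
  have key := key_M2_psi n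
  rw [psi_zsq, phi_zpow_sub_one] at key
  rw [psi_zsq, phi_zpow_sub_two, phi_zpow_sub_three]
  linear_combination key + phi ^ (2*(n:ℤ)+2) * phi_sq

lemma IdB_phi : (Nat.fib (2*n+3) : ℝ) - phi ^ (-(2*(n:ℤ)+2)) - phi ^ (-(2*(n:ℤ)+2)+1)
      - phi ^ (-(2*(n:ℤ)+2)+2)
    = ((Nat.fib (2*n+2) : ℝ) - phi ^ (-(2*(n:ℤ)+2)+2)) * phi ^ (1:ℤ) := by
  set j : ℤ := -(2*(n:ℤ)+2) with hj
  have key := key_M1_phi n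
  have s1 := stepAt (j+1) (j+2) (j+3) (by ring) (by ring)
  have p := prodAt1 (j+2) (j+3) (by ring)
  rw [zpow_one]
  linear_combination key + p + s1
  
lemma IdB_psi : (Nat.fib (2*n+3) : ℝ) - phi ^ (2*(n:ℤ)+2) + phi ^ (2*(n:ℤ)+2-1)
      - phi ^ (2*(n:ℤ)+2-2)
    = ((Nat.fib (2*n+2) : ℝ) - phi ^ (2*(n:ℤ)+2-2)) * psi ^ (1:ℤ) := by
  have key := key_M1_psi n
  rw [psi_val] at key
  rw [zpow_one, psi_val, phi_zpow_sub_one, phi_zpow_sub_two]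
  linear_combination key + phi ^ (2*(n:ℤ)+2) * phi_sq

lemma IdC_phi : (Nat.fib (2*n+3) : ℝ) - phi ^ (-(2*(n:ℤ)+2)) - phi ^ (-(2*(n:ℤ)+2)+1)
      - phi ^ (-(2*(n:ℤ)+2)+2) - phi ^ (-(2*(n:ℤ)+2)+3) - phi ^ (-(2*(n:ℤ)+2)+4)
    = ((Nat.fib (2*n+1) : ℝ) - phi ^ (-(2*(n:ℤ)+2)+2) - phi ^ (-(2*(n:ℤ)+2)+3))
        * phi ^ (2:ℤ) := by
  set j : ℤ := -(2*(n:ℤ)+2) with hj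
  have key := key_M2_phi n
  have s0 := stepAt j (j+1) (j+2) (by ring) (by ring)
  have s1 := stepAt (j+1) (j+2) (j+3) (by ring) (by ring)
  have s2 := stepAt (j+2) (j+3) (j+4) (by ring) (by ring)
  have s3 := stepAt (j+3) (j+4) (j+5) (by ring) (by ring)
  have p1 := prodAt (j+2) 2 (j+4) (by ring)
  have p2 := prodAt (j+3) 2 (j+5) (by ring)
  linear_combination key + p1 + p2 + s0 + s1 + s2 + s3

lemma IdC_psi : (Nat.fib (2*n+3) : ℝ) - phi ^ (2*(n:ℤ)+2) + phi ^ (2*(n:ℤ)+2-1)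
      - phi ^ (2*(n:ℤ)+2-2) + phi ^ (2*(n:ℤ)+2-3) - phi ^ (2*(n:ℤ)+2-4)
    = ((Nat.fib (2*n+1) : ℝ) - phi ^ (2*(n:ℤ)+2-2) + phi ^ (2*(n:ℤ)+2-3))
        * psi ^ (2:ℤ) := by
  have key := key_M2_psi n
  rw [psi_zsq, phi_zpow_sub_one] at key
  rw [psi_zsq, phi_zpow_sub_one, phi_zpow_sub_two, phi_zpow_sub_three, phi_zpow_sub_four]
  linear_combination key + 3 * phi ^ (2*(n:ℤ)+2) * phi_sq

lemma IdD_phi : (Nat.fib (2*n+4) : ℝ) - phi ^ (-(2*(n:ℤ)+2))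
    = ((Nat.fib (2*n+3) : ℝ) - phi ^ (-(2*(n:ℤ)+2))) * phi ^ (1:ℤ) := by
  set j : ℤ := -(2*(n:ℤ)+2) with hj
  have key := key_M1_phi' n
  have s := stepAt (j-1) j (j+1) (by ring) (by ring)
  have p := prodAt1 j (j+1) (by ring)
  rw [zpow_one]
  linear_combination key + s + p

lemma IdD_psi : (Nat.fib (2*n+4) : ℝ) - phi ^ (2*(n:ℤ)+2)
    = ((Nat.fib (2*n+3) : ℝ) - phi ^ (2*(n:ℤ)+2)) * psi ^ (1:ℤ) := by
  have key := key_M1_psi' n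
  rw [psi_val] at key
  have m := prodAt1 (2*(n:ℤ)+2) (2*(n:ℤ)+2+1) (by ring)
  rw [zpow_one, psi_val]
  linear_combination key - m

end Ids

-- base cases
lemma base_E : ESet 1 1 0 = {({0} : Finset ℤ)} := by
  ext S
  simp only [Set.mem_singleton_iff]
  constructor
  · rintro ⟨⟨hb, hφ, hψ⟩, h0⟩
    apply Finset.Subset.antisymm
    · intro i hi
      rw [Finset.mem_singleton]
      by_contra hne
      have hi1 : 1 ≤ i := by have := hb i hi; omega
      have hpair : ({0, i} : Finset ℤ) ⊆ S := by
        intro x hx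
        rcases Finset.mem_insert.mp hx with rfl | hx
        · exact h0
        · rw [Finset.mem_singleton] at hx; exact hx ▸ hi
      have hsum : ∑ x ∈ ({0, i} : Finset ℤ), phi ^ x ≤ ∑ x ∈ S, phi ^ x :=
        Finset.sum_le_sum_of_subset_of_nonneg hpair (fun x _ _ => (phi_zpow_pos x).le)
      rw [Finset.sum_pair (by omega : (0:ℤ) ≠ i), hφ] at hsum
      have h1 : phi ^ (1:ℤ) ≤ phi ^ i := phi_zpow_mono hi1
      rw [zpow_one] at h1
      have := phi_zpow_pos (0:ℤ)
      rw [zpow_zero] at hsum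
      nlinarith [phi_gt]
    · intro i hi
      rw [Finset.mem_singleton] at hi
      exact hi ▸ h0
  · rintro rfl
    refine ⟨⟨?_, ?_, ?_⟩, Finset.mem_singleton_self 0⟩
    · intro i hi; rw [Finset.mem_singleton] at hi; omega
    · rw [Finset.sum_singleton, zpow_zero]
    · rw [Finset.sum_singleton, zpow_zero]

lemma base_W : WSet 1 1 0 = ∅ := by
  ext S
  simp only [Set.mem_empty_iff_false, iff_false]
  rintro ⟨⟨⟨hb, hφ, _⟩, h0⟩, h1⟩
  have hpair : ({0, (0:ℤ)+1} : Finset ℤ) ⊆ S := by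
    intro x hx
    rcases Finset.mem_insert.mp hx with rfl | hx
    · exact h0
    · rw [Finset.mem_singleton] at hx; exact hx ▸ h1
  have hsum : ∑ x ∈ ({0, (0:ℤ)+1} : Finset ℤ), phi ^ x ≤ ∑ x ∈ S, phi ^ x :=
    Finset.sum_le_sum_of_subset_of_nonneg hpair (fun x _ _ => (phi_zpow_pos x).le)
  rw [Finset.sum_pair (by omega : (0:ℤ) ≠ 0+1), hφ, zpow_zero] at hsum
  have h1' : phi ^ ((0:ℤ)+1) = phi := by rw [zero_add, zpow_one]
  rw [h1'] at hsum
  nlinarith [phi_gt]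

lemma fib_sum3 (m : ℕ) : Nat.fib (m+2) + Nat.fib (m+1) = Nat.fib (m+3) := by
  calc Nat.fib (m+2) + Nat.fib (m+1) = Nat.fib (m+1) + Nat.fib (m+2) := Nat.add_comm _ _
    _ = Nat.fib (m+1) + Nat.fib (m+1+1) := by rw [show m+1+1 = m+2 by ring]
    _ = Nat.fib (m+1+2) := (Nat.fib_add_two).symm
    _ = Nat.fib (m+3) := by rw [show m+1+2 = m+3 by ring]

lemma count_main (n : ℕ) :
    (ESet (Nat.fib (2*n+1)) (Nat.fib (2*n+1)) (-(2*(n:ℤ)))).ncard = Nat.fib (2*n+1) ∧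
    (WSet (Nat.fib (2*n+1)) (Nat.fib (2*n+1)) (-(2*(n:ℤ)))).ncard = Nat.fib (2*n) ∧
    (ESet (Nat.fib (2*n+2)) (Nat.fib (2*n+2)) (-(2*(n:ℤ)))).ncard = Nat.fib (2*n+1) := by
  induction n with
  | zero =>
    have e0 : (-(2*((0:ℕ):ℤ))) = 0 := by norm_num
    have ef1 : ((Nat.fib (2*0+1) : ℝ)) = 1 := by norm_num
    have ef2 : ((Nat.fib (2*0+2) : ℝ)) = 1 := by norm_num [Nat.fib]
    refine ⟨?_, ?_, ?_⟩
    · rw [e0, ef1, base_E, Set.ncard_singleton]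
      norm_num
    · rw [e0, ef1, base_W, Set.ncard_empty]
      rfl
    · rw [e0, ef2, base_E, Set.ncard_singleton]
      norm_num [Nat.fib]
  | succ n ih =>
    obtain ⟨ihE, ihW, ihB⟩ := ih
    have hk : (-(2*(((n+1):ℕ):ℤ))) = (-(2*(n:ℤ)+2)) := by push_cast; ring
    have hi1 : 2*(n+1)+1 = 2*n+3 := by ring
    have hi2 : 2*(n+1) = 2*n+2 := by ring
    have hi3 : 2*(n+1)+2 = 2*n+4 := by ring
    rw [hk, hi1, hi3, hi2]
    -- IH restated at our index forms
    have ihE' : (ESet ((Nat.fib (2*n+1) : ℝ)) ((Nat.fib (2*n+1) : ℝ)) ((-(2*(n:ℤ)+2))+2)).ncard = Nat.fib (2*n+1) := by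
      rw [show ((-(2*(n:ℤ)+2))+2 : ℤ) = -(2*(n:ℤ)) by ring]; exact ihE
    have ihW' : (WSet ((Nat.fib (2*n+1) : ℝ)) ((Nat.fib (2*n+1) : ℝ)) ((-(2*(n:ℤ)+2))+2)).ncard = Nat.fib (2*n) := by
      rw [show ((-(2*(n:ℤ)+2))+2 : ℤ) = -(2*(n:ℤ)) by ring]; exact ihW
    have ihB' : (ESet ((Nat.fib (2*n+2) : ℝ)) ((Nat.fib (2*n+2) : ℝ)) ((-(2*(n:ℤ)+2))+2)).ncard = Nat.fib (2*n+1) := by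
      rw [show ((-(2*(n:ℤ)+2))+2 : ℤ) = -(2*(n:ℤ)) by ring]; exact ihB
    -- ===== noW chain =====
    have st1 : (ESet ((Nat.fib (2*n+3) : ℝ)) ((Nat.fib (2*n+3) : ℝ)) (-(2*(n:ℤ)+2)) \ WSet ((Nat.fib (2*n+3) : ℝ)) ((Nat.fib (2*n+3) : ℝ)) (-(2*(n:ℤ)+2))).ncard
        = (RSet (((Nat.fib (2*n+3) : ℝ)) - phi ^ (-(2*(n:ℤ)+2))) (((Nat.fib (2*n+3) : ℝ)) - phi ^ (2*(n:ℤ)+2)) ((-(2*(n:ℤ)+2))+2)).ncard := by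
      apply ncard_peel_EW
      · ring
      · rw [psi_at0 (epar n)]
    have st2 : (RSet (((Nat.fib (2*n+3) : ℝ)) - phi ^ (-(2*(n:ℤ)+2))) (((Nat.fib (2*n+3) : ℝ)) - phi ^ (2*(n:ℤ)+2)) ((-(2*(n:ℤ)+2))+2)).ncard = (RSet (((Nat.fib (2*n+3) : ℝ)) - phi ^ (-(2*(n:ℤ)+2))) (((Nat.fib (2*n+3) : ℝ)) - phi ^ (2*(n:ℤ)+2)) ((-(2*(n:ℤ)+2))+3)).ncard := by
      have h := RSet_split (((Nat.fib (2*n+3) : ℝ)) - phi ^ (-(2*(n:ℤ)+2))) (((Nat.fib (2*n+3) : ℝ)) - phi ^ (2*(n:ℤ)+2)) ((-(2*(n:ℤ)+2))+2)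
      rw [X2 n (((Nat.fib (2*n+3) : ℝ)) - phi ^ (-(2*(n:ℤ)+2))), Set.ncard_empty, zero_add,
        show ((-(2*(n:ℤ)+2))+2+1 : ℤ) = (-(2*(n:ℤ)+2))+3 by ring] at h
      exact h
    have st3 : (RSet (((Nat.fib (2*n+3) : ℝ)) - phi ^ (-(2*(n:ℤ)+2))) (((Nat.fib (2*n+3) : ℝ)) - phi ^ (2*(n:ℤ)+2)) ((-(2*(n:ℤ)+2))+3)).ncard = (ESet (((Nat.fib (2*n+3) : ℝ)) - phi ^ (-(2*(n:ℤ)+2))) (((Nat.fib (2*n+3) : ℝ)) - phi ^ (2*(n:ℤ)+2)) ((-(2*(n:ℤ)+2))+3)).ncard := by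
      have h := RSet_split (((Nat.fib (2*n+3) : ℝ)) - phi ^ (-(2*(n:ℤ)+2))) (((Nat.fib (2*n+3) : ℝ)) - phi ^ (2*(n:ℤ)+2)) ((-(2*(n:ℤ)+2))+3)
      rw [show ((-(2*(n:ℤ)+2))+3+1 : ℤ) = (-(2*(n:ℤ)+2))+4 by ring, X3 n (((Nat.fib (2*n+3) : ℝ)) - phi ^ (-(2*(n:ℤ)+2))), Set.ncard_empty, add_zero] at h
      exact h
    have st4 : (ESet (((Nat.fib (2*n+3) : ℝ)) - phi ^ (-(2*(n:ℤ)+2))) (((Nat.fib (2*n+3) : ℝ)) - phi ^ (2*(n:ℤ)+2)) ((-(2*(n:ℤ)+2))+3)).ncard = (RSet (((Nat.fib (2*n+3) : ℝ)) - phi ^ (-(2*(n:ℤ)+2)) - phi ^ ((-(2*(n:ℤ)+2))+3)) (((Nat.fib (2*n+3) : ℝ)) - phi ^ (2*(n:ℤ)+2) + phi ^ ((2*(n:ℤ)+2)-3)) ((-(2*(n:ℤ)+2))+4)).ncard := by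
      have h := ncard_peel_E (((Nat.fib (2*n+3) : ℝ)) - phi ^ (-(2*(n:ℤ)+2))) (((Nat.fib (2*n+3) : ℝ)) - phi ^ (2*(n:ℤ)+2)) (((Nat.fib (2*n+3) : ℝ)) - phi ^ (-(2*(n:ℤ)+2)) - phi ^ ((-(2*(n:ℤ)+2))+3)) (((Nat.fib (2*n+3) : ℝ)) - phi ^ (2*(n:ℤ)+2) + phi ^ ((2*(n:ℤ)+2)-3)) ((-(2*(n:ℤ)+2))+3) (by ring)
        (by rw [psi_at3 (epar n)]; try ring)
      rw [show ((-(2*(n:ℤ)+2))+3+1 : ℤ) = (-(2*(n:ℤ)+2))+4 by ring] at h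
      exact h
    have st5 : (RSet (((Nat.fib (2*n+3) : ℝ)) - phi ^ (-(2*(n:ℤ)+2)) - phi ^ ((-(2*(n:ℤ)+2))+3)) (((Nat.fib (2*n+3) : ℝ)) - phi ^ (2*(n:ℤ)+2) + phi ^ ((2*(n:ℤ)+2)-3)) ((-(2*(n:ℤ)+2))+4)).ncard = (RSet (((Nat.fib (2*n+3) : ℝ)) - phi ^ (-(2*(n:ℤ)+2)) - phi ^ ((-(2*(n:ℤ)+2))+3)) (((Nat.fib (2*n+3) : ℝ)) - phi ^ (2*(n:ℤ)+2) + phi ^ ((2*(n:ℤ)+2)-3)) ((-(2*(n:ℤ)+2))+5)).ncard := by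
      have h := RSet_split (((Nat.fib (2*n+3) : ℝ)) - phi ^ (-(2*(n:ℤ)+2)) - phi ^ ((-(2*(n:ℤ)+2))+3)) (((Nat.fib (2*n+3) : ℝ)) - phi ^ (2*(n:ℤ)+2) + phi ^ ((2*(n:ℤ)+2)-3)) ((-(2*(n:ℤ)+2))+4)
      rw [X4 n (((Nat.fib (2*n+3) : ℝ)) - phi ^ (-(2*(n:ℤ)+2)) - phi ^ ((-(2*(n:ℤ)+2))+3)), Set.ncard_empty, zero_add,
        show ((-(2*(n:ℤ)+2))+4+1 : ℤ) = (-(2*(n:ℤ)+2))+5 by ring] at h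
      exact h
    have st6 : (RSet (((Nat.fib (2*n+3) : ℝ)) - phi ^ (-(2*(n:ℤ)+2)) - phi ^ ((-(2*(n:ℤ)+2))+3)) (((Nat.fib (2*n+3) : ℝ)) - phi ^ (2*(n:ℤ)+2) + phi ^ ((2*(n:ℤ)+2)-3)) ((-(2*(n:ℤ)+2))+5)).ncard = (RSet (((Nat.fib (2*n+1) : ℝ)) - phi ^ ((-(2*(n:ℤ)+2))+2)) (((Nat.fib (2*n+1) : ℝ)) - phi ^ ((2*(n:ℤ)+2)-2)) ((-(2*(n:ℤ)+2))+3)).ncard := by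
      apply ncard_shift (((Nat.fib (2*n+3) : ℝ)) - phi ^ (-(2*(n:ℤ)+2)) - phi ^ ((-(2*(n:ℤ)+2))+3)) (((Nat.fib (2*n+3) : ℝ)) - phi ^ (2*(n:ℤ)+2) + phi ^ ((2*(n:ℤ)+2)-3)) (((Nat.fib (2*n+1) : ℝ)) - phi ^ ((-(2*(n:ℤ)+2))+2)) (((Nat.fib (2*n+1) : ℝ)) - phi ^ ((2*(n:ℤ)+2)-2)) ((-(2*(n:ℤ)+2))+5) (-2) ((-(2*(n:ℤ)+2))+3)
      · exact eq_mul_inv_of phi_ne_zero (IdA_phi n)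
      · exact eq_mul_inv_of psi_ne_zero (IdA_psi n)
      · ring
    have st7 : (ESet ((Nat.fib (2*n+1) : ℝ)) ((Nat.fib (2*n+1) : ℝ)) ((-(2*(n:ℤ)+2))+2)).ncard = (RSet (((Nat.fib (2*n+1) : ℝ)) - phi ^ ((-(2*(n:ℤ)+2))+2)) (((Nat.fib (2*n+1) : ℝ)) - phi ^ ((2*(n:ℤ)+2)-2)) ((-(2*(n:ℤ)+2))+3)).ncard := by
      have h := ncard_peel_E ((Nat.fib (2*n+1) : ℝ)) ((Nat.fib (2*n+1) : ℝ)) (((Nat.fib (2*n+1) : ℝ)) - phi ^ ((-(2*(n:ℤ)+2))+2)) (((Nat.fib (2*n+1) : ℝ)) - phi ^ ((2*(n:ℤ)+2)-2)) ((-(2*(n:ℤ)+2))+2) (by ring)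
        (by rw [psi_at2 (epar n)])
      rw [show ((-(2*(n:ℤ)+2))+2+1 : ℤ) = (-(2*(n:ℤ)+2))+3 by ring] at h
      exact h
    have noW : (ESet ((Nat.fib (2*n+3) : ℝ)) ((Nat.fib (2*n+3) : ℝ)) (-(2*(n:ℤ)+2)) \ WSet ((Nat.fib (2*n+3) : ℝ)) ((Nat.fib (2*n+3) : ℝ)) (-(2*(n:ℤ)+2))).ncard = Nat.fib (2*n+1) := by
      rw [st1, st2, st3, st4, st5, st6, ← st7, ihE']
    -- ===== W chain =====
    have su1 : (WSet ((Nat.fib (2*n+3) : ℝ)) ((Nat.fib (2*n+3) : ℝ)) (-(2*(n:ℤ)+2))).ncard = (ESet (((Nat.fib (2*n+3) : ℝ)) - phi ^ (-(2*(n:ℤ)+2))) (((Nat.fib (2*n+3) : ℝ)) - phi ^ (2*(n:ℤ)+2)) ((-(2*(n:ℤ)+2))+1)).ncard := by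
      have h := ncard_peel_W ((Nat.fib (2*n+3) : ℝ)) ((Nat.fib (2*n+3) : ℝ)) (((Nat.fib (2*n+3) : ℝ)) - phi ^ (-(2*(n:ℤ)+2))) (((Nat.fib (2*n+3) : ℝ)) - phi ^ (2*(n:ℤ)+2)) (-(2*(n:ℤ)+2)) (by ring) (by rw [psi_at0 (epar n)])
      rw [show ((-(2*(n:ℤ)+2))+1 : ℤ) = (-(2*(n:ℤ)+2))+1 by ring] at h
      exact h
    have su2 : (ESet (((Nat.fib (2*n+3) : ℝ)) - phi ^ (-(2*(n:ℤ)+2))) (((Nat.fib (2*n+3) : ℝ)) - phi ^ (2*(n:ℤ)+2)) ((-(2*(n:ℤ)+2))+1)).ncard = (RSet (((Nat.fib (2*n+3) : ℝ)) - phi ^ (-(2*(n:ℤ)+2)) - phi ^ ((-(2*(n:ℤ)+2))+1)) (((Nat.fib (2*n+3) : ℝ)) - phi ^ (2*(n:ℤ)+2) + phi ^ ((2*(n:ℤ)+2)-1)) ((-(2*(n:ℤ)+2))+2)).ncard := by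
      have h := ncard_peel_E (((Nat.fib (2*n+3) : ℝ)) - phi ^ (-(2*(n:ℤ)+2))) (((Nat.fib (2*n+3) : ℝ)) - phi ^ (2*(n:ℤ)+2)) (((Nat.fib (2*n+3) : ℝ)) - phi ^ (-(2*(n:ℤ)+2)) - phi ^ ((-(2*(n:ℤ)+2))+1)) (((Nat.fib (2*n+3) : ℝ)) - phi ^ (2*(n:ℤ)+2) + phi ^ ((2*(n:ℤ)+2)-1)) ((-(2*(n:ℤ)+2))+1) (by ring)
        (by rw [psi_at1 (epar n)]; try ring)
      rw [show ((-(2*(n:ℤ)+2))+1+1 : ℤ) = (-(2*(n:ℤ)+2))+2 by ring] at h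
      exact h
    have su3 : (RSet (((Nat.fib (2*n+3) : ℝ)) - phi ^ (-(2*(n:ℤ)+2)) - phi ^ ((-(2*(n:ℤ)+2))+1)) (((Nat.fib (2*n+3) : ℝ)) - phi ^ (2*(n:ℤ)+2) + phi ^ ((2*(n:ℤ)+2)-1)) ((-(2*(n:ℤ)+2))+2)).ncard = (ESet (((Nat.fib (2*n+3) : ℝ)) - phi ^ (-(2*(n:ℤ)+2)) - phi ^ ((-(2*(n:ℤ)+2))+1)) (((Nat.fib (2*n+3) : ℝ)) - phi ^ (2*(n:ℤ)+2) + phi ^ ((2*(n:ℤ)+2)-1)) ((-(2*(n:ℤ)+2))+2)).ncard := by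
      have h := RSet_split (((Nat.fib (2*n+3) : ℝ)) - phi ^ (-(2*(n:ℤ)+2)) - phi ^ ((-(2*(n:ℤ)+2))+1)) (((Nat.fib (2*n+3) : ℝ)) - phi ^ (2*(n:ℤ)+2) + phi ^ ((2*(n:ℤ)+2)-1)) ((-(2*(n:ℤ)+2))+2)
      rw [show ((-(2*(n:ℤ)+2))+2+1 : ℤ) = (-(2*(n:ℤ)+2))+3 by ring, X5 n (((Nat.fib (2*n+3) : ℝ)) - phi ^ (-(2*(n:ℤ)+2)) - phi ^ ((-(2*(n:ℤ)+2))+1)), Set.ncard_empty, add_zero] at h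
      exact h
    have su4 : (ESet (((Nat.fib (2*n+3) : ℝ)) - phi ^ (-(2*(n:ℤ)+2)) - phi ^ ((-(2*(n:ℤ)+2))+1)) (((Nat.fib (2*n+3) : ℝ)) - phi ^ (2*(n:ℤ)+2) + phi ^ ((2*(n:ℤ)+2)-1)) ((-(2*(n:ℤ)+2))+2)).ncard = (RSet (((Nat.fib (2*n+3) : ℝ)) - phi ^ (-(2*(n:ℤ)+2)) - phi ^ ((-(2*(n:ℤ)+2))+1) - phi ^ ((-(2*(n:ℤ)+2))+2)) (((Nat.fib (2*n+3) : ℝ)) - phi ^ (2*(n:ℤ)+2) + phi ^ ((2*(n:ℤ)+2)-1) - phi ^ ((2*(n:ℤ)+2)-2)) ((-(2*(n:ℤ)+2))+3)).ncard := by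
      have h := ncard_peel_E (((Nat.fib (2*n+3) : ℝ)) - phi ^ (-(2*(n:ℤ)+2)) - phi ^ ((-(2*(n:ℤ)+2))+1)) (((Nat.fib (2*n+3) : ℝ)) - phi ^ (2*(n:ℤ)+2) + phi ^ ((2*(n:ℤ)+2)-1)) (((Nat.fib (2*n+3) : ℝ)) - phi ^ (-(2*(n:ℤ)+2)) - phi ^ ((-(2*(n:ℤ)+2))+1) - phi ^ ((-(2*(n:ℤ)+2))+2)) (((Nat.fib (2*n+3) : ℝ)) - phi ^ (2*(n:ℤ)+2) + phi ^ ((2*(n:ℤ)+2)-1) - phi ^ ((2*(n:ℤ)+2)-2)) ((-(2*(n:ℤ)+2))+2) (by ring)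
        (by rw [psi_at2 (epar n)]; try ring)
      rw [show ((-(2*(n:ℤ)+2))+2+1 : ℤ) = (-(2*(n:ℤ)+2))+3 by ring] at h
      exact h
    have su5 : (RSet (((Nat.fib (2*n+3) : ℝ)) - phi ^ (-(2*(n:ℤ)+2)) - phi ^ ((-(2*(n:ℤ)+2))+1) - phi ^ ((-(2*(n:ℤ)+2))+2)) (((Nat.fib (2*n+3) : ℝ)) - phi ^ (2*(n:ℤ)+2) + phi ^ ((2*(n:ℤ)+2)-1) - phi ^ ((2*(n:ℤ)+2)-2)) ((-(2*(n:ℤ)+2))+3)).ncard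
        = (ESet (((Nat.fib (2*n+3) : ℝ)) - phi ^ (-(2*(n:ℤ)+2)) - phi ^ ((-(2*(n:ℤ)+2))+1) - phi ^ ((-(2*(n:ℤ)+2))+2)) (((Nat.fib (2*n+3) : ℝ)) - phi ^ (2*(n:ℤ)+2) + phi ^ ((2*(n:ℤ)+2)-1) - phi ^ ((2*(n:ℤ)+2)-2)) ((-(2*(n:ℤ)+2))+3)).ncard + (RSet (((Nat.fib (2*n+3) : ℝ)) - phi ^ (-(2*(n:ℤ)+2)) - phi ^ ((-(2*(n:ℤ)+2))+1) - phi ^ ((-(2*(n:ℤ)+2))+2)) (((Nat.fib (2*n+3) : ℝ)) - phi ^ (2*(n:ℤ)+2) + phi ^ ((2*(n:ℤ)+2)-1) - phi ^ ((2*(n:ℤ)+2)-2)) ((-(2*(n:ℤ)+2))+4)).ncard := by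
      have h := RSet_split (((Nat.fib (2*n+3) : ℝ)) - phi ^ (-(2*(n:ℤ)+2)) - phi ^ ((-(2*(n:ℤ)+2))+1) - phi ^ ((-(2*(n:ℤ)+2))+2)) (((Nat.fib (2*n+3) : ℝ)) - phi ^ (2*(n:ℤ)+2) + phi ^ ((2*(n:ℤ)+2)-1) - phi ^ ((2*(n:ℤ)+2)-2)) ((-(2*(n:ℤ)+2))+3)
      rw [show ((-(2*(n:ℤ)+2))+3+1 : ℤ) = (-(2*(n:ℤ)+2))+4 by ring] at h
      exact h
    have sb1 : (RSet (((Nat.fib (2*n+3) : ℝ)) - phi ^ (-(2*(n:ℤ)+2)) - phi ^ ((-(2*(n:ℤ)+2))+1) - phi ^ ((-(2*(n:ℤ)+2))+2)) (((Nat.fib (2*n+3) : ℝ)) - phi ^ (2*(n:ℤ)+2) + phi ^ ((2*(n:ℤ)+2)-1) - phi ^ ((2*(n:ℤ)+2)-2)) ((-(2*(n:ℤ)+2))+4)).ncard = (RSet (((Nat.fib (2*n+3) : ℝ)) - phi ^ (-(2*(n:ℤ)+2)) - phi ^ ((-(2*(n:ℤ)+2))+1) - phi ^ ((-(2*(n:ℤ)+2))+2))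 (((Nat.fib (2*n+3) : ℝ)) - phi ^ (2*(n:ℤ)+2) + phi ^ ((2*(n:ℤ)+2)-1) - phi ^ ((2*(n:ℤ)+2)-2)) ((-(2*(n:ℤ)+2))+5)).ncard := by
      have h := RSet_split (((Nat.fib (2*n+3) : ℝ)) - phi ^ (-(2*(n:ℤ)+2)) - phi ^ ((-(2*(n:ℤ)+2))+1) - phi ^ ((-(2*(n:ℤ)+2))+2)) (((Nat.fib (2*n+3) : ℝ)) - phi ^ (2*(n:ℤ)+2) + phi ^ ((2*(n:ℤ)+2)-1) - phi ^ ((2*(n:ℤ)+2)-2)) ((-(2*(n:ℤ)+2))+4)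
      rw [X8 n (((Nat.fib (2*n+3) : ℝ)) - phi ^ (-(2*(n:ℤ)+2)) - phi ^ ((-(2*(n:ℤ)+2))+1) - phi ^ ((-(2*(n:ℤ)+2))+2)), Set.ncard_empty, zero_add,
        show ((-(2*(n:ℤ)+2))+4+1 : ℤ) = (-(2*(n:ℤ)+2))+5 by ring] at h
      exact h
    have sb2 : (RSet (((Nat.fib (2*n+3) : ℝ)) - phi ^ (-(2*(n:ℤ)+2)) - phi ^ ((-(2*(n:ℤ)+2))+1) - phi ^ ((-(2*(n:ℤ)+2))+2)) (((Nat.fib (2*n+3) : ℝ)) - phi ^ (2*(n:ℤ)+2) + phi ^ ((2*(n:ℤ)+2)-1) - phi ^ ((2*(n:ℤ)+2)-2)) ((-(2*(n:ℤ)+2))+5)).ncard = (RSet (((Nat.fib (2*n+2) : ℝ)) - phi ^ ((-(2*(n:ℤ)+2))+2)) (((Nat.fib (2*n+2) : ℝ)) - phi ^ ((2*(n:ℤ)+2)-2)) ((-(2*(n:ℤ)+2))+4)).ncard := by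
      apply ncard_shift (((Nat.fib (2*n+3) : ℝ)) - phi ^ (-(2*(n:ℤ)+2)) - phi ^ ((-(2*(n:ℤ)+2))+1) - phi ^ ((-(2*(n:ℤ)+2))+2)) (((Nat.fib (2*n+3) : ℝ)) - phi ^ (2*(n:ℤ)+2) + phi ^ ((2*(n:ℤ)+2)-1) - phi ^ ((2*(n:ℤ)+2)-2)) (((Nat.fib (2*n+2) : ℝ)) - phi ^ ((-(2*(n:ℤ)+2))+2)) (((Nat.fib (2*n+2) : ℝ)) - phi ^ ((2*(n:ℤ)+2)-2)) ((-(2*(n:ℤ)+2))+5) (-1) ((-(2*(n:ℤ)+2))+4)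
      · exact eq_mul_inv_of phi_ne_zero (IdB_phi n)
      · exact eq_mul_inv_of psi_ne_zero (IdB_psi n)
      · ring
    have sb3 : (ESet ((Nat.fib (2*n+2) : ℝ)) ((Nat.fib (2*n+2) : ℝ)) ((-(2*(n:ℤ)+2))+2)).ncard = (RSet (((Nat.fib (2*n+2) : ℝ)) - phi ^ ((-(2*(n:ℤ)+2))+2)) (((Nat.fib (2*n+2) : ℝ)) - phi ^ ((2*(n:ℤ)+2)-2)) ((-(2*(n:ℤ)+2))+4)).ncard := by
      have h1 := ncard_peel_E ((Nat.fib (2*n+2) : ℝ)) ((Nat.fib (2*n+2) : ℝ)) (((Nat.fib (2*n+2) : ℝ)) - phi ^ ((-(2*(n:ℤ)+2))+2)) (((Nat.fib (2*n+2) : ℝ)) - phi ^ ((2*(n:ℤ)+2)-2)) ((-(2*(n:ℤ)+2))+2) (by ring)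
        (by rw [psi_at2 (epar n)])
      rw [show ((-(2*(n:ℤ)+2))+2+1 : ℤ) = (-(2*(n:ℤ)+2))+3 by ring] at h1
      have h2 := RSet_split (((Nat.fib (2*n+2) : ℝ)) - phi ^ ((-(2*(n:ℤ)+2))+2)) (((Nat.fib (2*n+2) : ℝ)) - phi ^ ((2*(n:ℤ)+2)-2)) ((-(2*(n:ℤ)+2))+3)
      have hx1 := X1 n (((Nat.fib (2*n+2) : ℝ)) - phi ^ ((-(2*(n:ℤ)+2))+2))
      rw [show (-(2*(n:ℤ))+1 : ℤ) = (-(2*(n:ℤ)+2))+3 by ring,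
        show (phi ^ (2*(n:ℤ)) : ℝ) = phi ^ ((2*(n:ℤ)+2)-2) by rw [show ((2*(n:ℤ)+2)-2 : ℤ) = 2*(n:ℤ) by ring]] at hx1
      rw [hx1, Set.ncard_empty, zero_add, show ((-(2*(n:ℤ)+2))+3+1 : ℤ) = (-(2*(n:ℤ)+2))+4 by ring] at h2
      rw [h1, h2]
    have sa1 : (ESet (((Nat.fib (2*n+3) : ℝ)) - phi ^ (-(2*(n:ℤ)+2)) - phi ^ ((-(2*(n:ℤ)+2))+1) - phi ^ ((-(2*(n:ℤ)+2))+2)) (((Nat.fib (2*n+3) : ℝ)) - phi ^ (2*(n:ℤ)+2) + phi ^ ((2*(n:ℤ)+2)-1) - phi ^ ((2*(n:ℤ)+2)-2)) ((-(2*(n:ℤ)+2))+3)).ncard = (RSet (((Nat.fib (2*n+3) : ℝ)) - phi ^ (-(2*(n:ℤ)+2)) - phi ^ ((-(2*(n:ℤ)+2))+1) - phi ^ ((-(2*(n:ℤ)+2))+2) - phi ^ ((-(2*(n:ℤ)+2))+3)) (((Nat.fib (2*n+3) : ℝ)) - phi ^ (2*(n:ℤ)+2) + phi ^ ((2*(n:ℤ)+2)-1)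 - phi ^ ((2*(n:ℤ)+2)-2) + phi ^ ((2*(n:ℤ)+2)-3)) ((-(2*(n:ℤ)+2))+4)).ncard := by
      have h := ncard_peel_E (((Nat.fib (2*n+3) : ℝ)) - phi ^ (-(2*(n:ℤ)+2)) - phi ^ ((-(2*(n:ℤ)+2))+1) - phi ^ ((-(2*(n:ℤ)+2))+2)) (((Nat.fib (2*n+3) : ℝ)) - phi ^ (2*(n:ℤ)+2) + phi ^ ((2*(n:ℤ)+2)-1) - phi ^ ((2*(n:ℤ)+2)-2)) (((Nat.fib (2*n+3) : ℝ)) - phi ^ (-(2*(n:ℤ)+2)) - phi ^ ((-(2*(n:ℤ)+2))+1) - phi ^ ((-(2*(n:ℤ)+2))+2) - phi ^ ((-(2*(n:ℤ)+2))+3)) (((Nat.fib (2*n+3) : ℝ)) - phi ^ (2*(n:ℤ)+2) + phi ^ ((2*(n:ℤ)+2)-1) - phi ^ ((2*(n:ℤ)+2)-2) + phi ^ ((2*(n:ℤ)+2)-3)) ((-(2*(n:ℤ)+2))+3) (by ring)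
        (by rw [psi_at3 (epar n)]; try ring)
      rw [show ((-(2*(n:ℤ)+2))+3+1 : ℤ) = (-(2*(n:ℤ)+2))+4 by ring] at h
      exact h
    have sa2 : (RSet (((Nat.fib (2*n+3) : ℝ)) - phi ^ (-(2*(n:ℤ)+2)) - phi ^ ((-(2*(n:ℤ)+2))+1) - phi ^ ((-(2*(n:ℤ)+2))+2) - phi ^ ((-(2*(n:ℤ)+2))+3)) (((Nat.fib (2*n+3) : ℝ)) - phi ^ (2*(n:ℤ)+2) + phi ^ ((2*(n:ℤ)+2)-1) - phi ^ ((2*(n:ℤ)+2)-2) + phi ^ ((2*(n:ℤ)+2)-3)) ((-(2*(n:ℤ)+2))+4)).ncard = (ESet (((Nat.fib (2*n+3) : ℝ)) - phi ^ (-(2*(n:ℤ)+2)) - phi ^ ((-(2*(n:ℤ)+2))+1) - phi ^ ((-(2*(n:ℤ)+2))+2) - phi ^ ((-(2*(n:ℤ)+2))+3)) (((Nat.fib (2*n+3) : ℝ)) - phi ^ (2*(n:ℤ)+2) + phi ^ ((2*(n:ℤ)+2)-1) - phi ^ ((2*(n:ℤ)+2)-2) + phi ^ ((2*(n:ℤ)+2)-3))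 ((-(2*(n:ℤ)+2))+4)).ncard := by
      have h := RSet_split (((Nat.fib (2*n+3) : ℝ)) - phi ^ (-(2*(n:ℤ)+2)) - phi ^ ((-(2*(n:ℤ)+2))+1) - phi ^ ((-(2*(n:ℤ)+2))+2) - phi ^ ((-(2*(n:ℤ)+2))+3)) (((Nat.fib (2*n+3) : ℝ)) - phi ^ (2*(n:ℤ)+2) + phi ^ ((2*(n:ℤ)+2)-1) - phi ^ ((2*(n:ℤ)+2)-2) + phi ^ ((2*(n:ℤ)+2)-3)) ((-(2*(n:ℤ)+2))+4)
      rw [show ((-(2*(n:ℤ)+2))+4+1 : ℤ) = (-(2*(n:ℤ)+2))+5 by ring, X6 n (((Nat.fib (2*n+3) : ℝ)) - phi ^ (-(2*(n:ℤ)+2)) - phi ^ ((-(2*(n:ℤ)+2))+1) - phi ^ ((-(2*(n:ℤ)+2))+2) - phi ^ ((-(2*(n:ℤ)+2))+3)), Set.ncard_empty, add_zero] at h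
      exact h
    have sa3 : (ESet (((Nat.fib (2*n+3) : ℝ)) - phi ^ (-(2*(n:ℤ)+2)) - phi ^ ((-(2*(n:ℤ)+2))+1) - phi ^ ((-(2*(n:ℤ)+2))+2) - phi ^ ((-(2*(n:ℤ)+2))+3)) (((Nat.fib (2*n+3) : ℝ)) - phi ^ (2*(n:ℤ)+2) + phi ^ ((2*(n:ℤ)+2)-1) - phi ^ ((2*(n:ℤ)+2)-2) + phi ^ ((2*(n:ℤ)+2)-3)) ((-(2*(n:ℤ)+2))+4)).ncard = (RSet (((Nat.fib (2*n+3) : ℝ)) - phi ^ (-(2*(n:ℤ)+2)) - phi ^ ((-(2*(n:ℤ)+2))+1) - phi ^ ((-(2*(n:ℤ)+2))+2) - phi ^ ((-(2*(n:ℤ)+2))+3) - phi ^ ((-(2*(n:ℤ)+2))+4)) (((Nat.fib (2*n+3) : ℝ)) - phi ^ (2*(n:ℤ)+2) + phi ^ ((2*(n:ℤ)+2)-1) - phi ^ ((2*(n:ℤ)+2)-2) + phi ^ ((2*(n:ℤ)+2)-3) - phi ^ ((2*(n:ℤ)+2)-4)) ((-(2*(n:ℤ)+2))+5)).ncard :=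 by
      have h := ncard_peel_E (((Nat.fib (2*n+3) : ℝ)) - phi ^ (-(2*(n:ℤ)+2)) - phi ^ ((-(2*(n:ℤ)+2))+1) - phi ^ ((-(2*(n:ℤ)+2))+2) - phi ^ ((-(2*(n:ℤ)+2))+3)) (((Nat.fib (2*n+3) : ℝ)) - phi ^ (2*(n:ℤ)+2) + phi ^ ((2*(n:ℤ)+2)-1) - phi ^ ((2*(n:ℤ)+2)-2) + phi ^ ((2*(n:ℤ)+2)-3)) (((Nat.fib (2*n+3) : ℝ)) - phi ^ (-(2*(n:ℤ)+2)) - phi ^ ((-(2*(n:ℤ)+2))+1) - phi ^ ((-(2*(n:ℤ)+2))+2) - phi ^ ((-(2*(n:ℤ)+2))+3) - phi ^ ((-(2*(n:ℤ)+2))+4)) (((Nat.fib (2*n+3) : ℝ)) - phi ^ (2*(n:ℤ)+2) + phi ^ ((2*(n:ℤ)+2)-1) - phi ^ ((2*(n:ℤ)+2)-2) + phi ^ ((2*(n:ℤ)+2)-3) - phi ^ ((2*(n:ℤ)+2)-4)) ((-(2*(n:ℤ)+2))+4) (by ring)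
        (by rw [psi_at4 (epar n)]; try ring)
      rw [show ((-(2*(n:ℤ)+2))+4+1 : ℤ) = (-(2*(n:ℤ)+2))+5 by ring] at h
      exact h
    have sa4 : (RSet (((Nat.fib (2*n+3) : ℝ)) - phi ^ (-(2*(n:ℤ)+2)) - phi ^ ((-(2*(n:ℤ)+2))+1) - phi ^ ((-(2*(n:ℤ)+2))+2) - phi ^ ((-(2*(n:ℤ)+2))+3) - phi ^ ((-(2*(n:ℤ)+2))+4)) (((Nat.fib (2*n+3) : ℝ)) - phi ^ (2*(n:ℤ)+2) + phi ^ ((2*(n:ℤ)+2)-1) - phi ^ ((2*(n:ℤ)+2)-2) + phi ^ ((2*(n:ℤ)+2)-3) - phi ^ ((2*(n:ℤ)+2)-4)) ((-(2*(n:ℤ)+2))+5)).ncard = (RSet (((Nat.fib (2*n+3) : ℝ)) - phi ^ (-(2*(n:ℤ)+2)) - phi ^ ((-(2*(n:ℤ)+2))+1) - phi ^ ((-(2*(n:ℤ)+2))+2) - phi ^ ((-(2*(n:ℤ)+2))+3) - phi ^ ((-(2*(n:ℤ)+2))+4)) (((Nat.fib (2*n+3) : ℝ)) - phi ^ (2*(n:ℤ)+2)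 + phi ^ ((2*(n:ℤ)+2)-1) - phi ^ ((2*(n:ℤ)+2)-2) + phi ^ ((2*(n:ℤ)+2)-3) - phi ^ ((2*(n:ℤ)+2)-4)) ((-(2*(n:ℤ)+2))+6)).ncard := by
      have h := RSet_split (((Nat.fib (2*n+3) : ℝ)) - phi ^ (-(2*(n:ℤ)+2)) - phi ^ ((-(2*(n:ℤ)+2))+1) - phi ^ ((-(2*(n:ℤ)+2))+2) - phi ^ ((-(2*(n:ℤ)+2))+3) - phi ^ ((-(2*(n:ℤ)+2))+4)) (((Nat.fib (2*n+3) : ℝ)) - phi ^ (2*(n:ℤ)+2) + phi ^ ((2*(n:ℤ)+2)-1) - phi ^ ((2*(n:ℤ)+2)-2) + phi ^ ((2*(n:ℤ)+2)-3) - phi ^ ((2*(n:ℤ)+2)-4)) ((-(2*(n:ℤ)+2))+5)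
      rw [X7 n (((Nat.fib (2*n+3) : ℝ)) - phi ^ (-(2*(n:ℤ)+2)) - phi ^ ((-(2*(n:ℤ)+2))+1) - phi ^ ((-(2*(n:ℤ)+2))+2) - phi ^ ((-(2*(n:ℤ)+2))+3) - phi ^ ((-(2*(n:ℤ)+2))+4)), Set.ncard_empty, zero_add,
        show ((-(2*(n:ℤ)+2))+5+1 : ℤ) = (-(2*(n:ℤ)+2))+6 by ring] at h
      exact h
    have sa5 : (RSet (((Nat.fib (2*n+3) : ℝ)) - phi ^ (-(2*(n:ℤ)+2)) - phi ^ ((-(2*(n:ℤ)+2))+1) - phi ^ ((-(2*(n:ℤ)+2))+2) - phi ^ ((-(2*(n:ℤ)+2))+3) - phi ^ ((-(2*(n:ℤ)+2))+4)) (((Nat.fib (2*n+3) : ℝ)) - phi ^ (2*(n:ℤ)+2) + phi ^ ((2*(n:ℤ)+2)-1) - phi ^ ((2*(n:ℤ)+2)-2) + phi ^ ((2*(n:ℤ)+2)-3) - phi ^ ((2*(n:ℤ)+2)-4)) ((-(2*(n:ℤ)+2))+6)).ncard = (RSet (((Nat.fib (2*n+1) : ℝ)) - phi ^ ((-(2*(n:ℤ)+2))+2)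 - phi ^ ((-(2*(n:ℤ)+2))+3)) (((Nat.fib (2*n+1) : ℝ)) - phi ^ ((2*(n:ℤ)+2)-2) + phi ^ ((2*(n:ℤ)+2)-3)) ((-(2*(n:ℤ)+2))+4)).ncard := by
      apply ncard_shift (((Nat.fib (2*n+3) : ℝ)) - phi ^ (-(2*(n:ℤ)+2)) - phi ^ ((-(2*(n:ℤ)+2))+1) - phi ^ ((-(2*(n:ℤ)+2))+2) - phi ^ ((-(2*(n:ℤ)+2))+3) - phi ^ ((-(2*(n:ℤ)+2))+4)) (((Nat.fib (2*n+3) : ℝ)) - phi ^ (2*(n:ℤ)+2) + phi ^ ((2*(n:ℤ)+2)-1) - phi ^ ((2*(n:ℤ)+2)-2) + phi ^ ((2*(n:ℤ)+2)-3) - phi ^ ((2*(n:ℤ)+2)-4)) (((Nat.fib (2*n+1) : ℝ)) - phi ^ ((-(2*(n:ℤ)+2))+2) - phi ^ ((-(2*(n:ℤ)+2))+3)) (((Nat.fib (2*n+1) : ℝ)) - phi ^ ((2*(n:ℤ)+2)-2) + phi ^ ((2*(n:ℤ)+2)-3)) ((-(2*(n:ℤ)+2))+6) (-2) ((-(2*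(n:ℤ)+2))+4)
      · exact eq_mul_inv_of phi_ne_zero (IdC_phi n)
      · exact eq_mul_inv_of psi_ne_zero (IdC_psi n)
      · ring
    have sa6 : (WSet ((Nat.fib (2*n+1) : ℝ)) ((Nat.fib (2*n+1) : ℝ)) ((-(2*(n:ℤ)+2))+2)).ncard = (RSet (((Nat.fib (2*n+1) : ℝ)) - phi ^ ((-(2*(n:ℤ)+2))+2) - phi ^ ((-(2*(n:ℤ)+2))+3)) (((Nat.fib (2*n+1) : ℝ)) - phi ^ ((2*(n:ℤ)+2)-2) + phi ^ ((2*(n:ℤ)+2)-3)) ((-(2*(n:ℤ)+2))+4)).ncard := by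
      have h1 := ncard_peel_W ((Nat.fib (2*n+1) : ℝ)) ((Nat.fib (2*n+1) : ℝ)) (((Nat.fib (2*n+1) : ℝ)) - phi ^ ((-(2*(n:ℤ)+2))+2)) (((Nat.fib (2*n+1) : ℝ)) - phi ^ ((2*(n:ℤ)+2)-2)) ((-(2*(n:ℤ)+2))+2) (by ring)
        (by rw [psi_at2 (epar n)])
      rw [show ((-(2*(n:ℤ)+2))+2+1 : ℤ) = (-(2*(n:ℤ)+2))+3 by ring] at h1
      have h2 := ncard_peel_E (((Nat.fib (2*n+1) : ℝ)) - phi ^ ((-(2*(n:ℤ)+2))+2)) (((Nat.fib (2*n+1) : ℝ)) - phi ^ ((2*(n:ℤ)+2)-2)) (((Nat.fib (2*n+1) : ℝ)) - phi ^ ((-(2*(n:ℤ)+2))+2) - phi ^ ((-(2*(n:ℤ)+2))+3)) (((Nat.fib (2*n+1) : ℝ)) - phi ^ ((2*(n:ℤ)+2)-2) + phi ^ ((2*(n:ℤ)+2)-3)) ((-(2*(n:ℤ)+2))+3) (by ring)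
        (by rw [psi_at3 (epar n)]; try ring)
      rw [show ((-(2*(n:ℤ)+2))+3+1 : ℤ) = (-(2*(n:ℤ)+2))+4 by ring] at h2
      rw [h1, h2]
    have wcount : (WSet ((Nat.fib (2*n+3) : ℝ)) ((Nat.fib (2*n+3) : ℝ)) (-(2*(n:ℤ)+2))).ncard = Nat.fib (2*n+2) := by
      rw [su1, su2, su3, su4, su5, sa1, sa2, sa3, sa4, sa5, ← sa6, sb1, sb2, ← sb3,
        ihW', ihB']
      exact (Nat.fib_add_two).symm
    -- ===== odd total =====
    have odd : (ESet ((Nat.fib (2*n+3) : ℝ)) ((Nat.fib (2*n+3) : ℝ)) (-(2*(n:ℤ)+2))).ncard = Nat.fib (2*n+3) := by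
      rw [ESet_split, wcount, noW]
      exact fib_sum3 (2*n)
    -- ===== even chain =====
    have ev1 : (ESet ((Nat.fib (2*n+4) : ℝ)) ((Nat.fib (2*n+4) : ℝ)) (-(2*(n:ℤ)+2))).ncard = (RSet (((Nat.fib (2*n+4) : ℝ)) - phi ^ (-(2*(n:ℤ)+2))) (((Nat.fib (2*n+4) : ℝ)) - phi ^ (2*(n:ℤ)+2)) ((-(2*(n:ℤ)+2))+1)).ncard := by
      have h := ncard_peel_E ((Nat.fib (2*n+4) : ℝ)) ((Nat.fib (2*n+4) : ℝ)) (((Nat.fib (2*n+4) : ℝ)) - phi ^ (-(2*(n:ℤ)+2))) (((Nat.fib (2*n+4) : ℝ)) - phi ^ (2*(n:ℤ)+2)) (-(2*(n:ℤ)+2)) (by ring) (by rw [psi_at0 (epar n)])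
      exact h
    have ev2 : (RSet (((Nat.fib (2*n+4) : ℝ)) - phi ^ (-(2*(n:ℤ)+2))) (((Nat.fib (2*n+4) : ℝ)) - phi ^ (2*(n:ℤ)+2)) ((-(2*(n:ℤ)+2))+1)).ncard = (RSet (((Nat.fib (2*n+4) : ℝ)) - phi ^ (-(2*(n:ℤ)+2))) (((Nat.fib (2*n+4) : ℝ)) - phi ^ (2*(n:ℤ)+2)) ((-(2*(n:ℤ)+2))+2)).ncard := by
      have h := RSet_split (((Nat.fib (2*n+4) : ℝ)) - phi ^ (-(2*(n:ℤ)+2))) (((Nat.fib (2*n+4) : ℝ)) - phi ^ (2*(n:ℤ)+2)) ((-(2*(n:ℤ)+2))+1)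
      have hx1 := X1 (n+1) (((Nat.fib (2*n+4) : ℝ)) - phi ^ (-(2*(n:ℤ)+2)))
      rw [show (-(2*((n+1:ℕ):ℤ))+1 : ℤ) = (-(2*(n:ℤ)+2))+1 by push_cast; ring,
        show 2*(n+1)+2 = 2*n+4 by ring,
        show (phi ^ (2*((n+1:ℕ):ℤ)) : ℝ) = phi ^ (2*(n:ℤ)+2) by
          rw [show (2*((n+1:ℕ):ℤ) : ℤ) = (2*(n:ℤ)+2) by push_cast; ring]] at hx1
      rw [hx1, Set.ncard_empty, zero_add, show ((-(2*(n:ℤ)+2))+1+1 : ℤ) = (-(2*(n:ℤ)+2))+2 by ring] at h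
      exact h
    have ev3 : (RSet (((Nat.fib (2*n+4) : ℝ)) - phi ^ (-(2*(n:ℤ)+2))) (((Nat.fib (2*n+4) : ℝ)) - phi ^ (2*(n:ℤ)+2)) ((-(2*(n:ℤ)+2))+2)).ncard = (RSet (((Nat.fib (2*n+3) : ℝ)) - phi ^ (-(2*(n:ℤ)+2))) (((Nat.fib (2*n+3) : ℝ)) - phi ^ (2*(n:ℤ)+2)) ((-(2*(n:ℤ)+2))+1)).ncard := by
      apply ncard_shift (((Nat.fib (2*n+4) : ℝ)) - phi ^ (-(2*(n:ℤ)+2))) (((Nat.fib (2*n+4) : ℝ)) - phi ^ (2*(n:ℤ)+2)) (((Nat.fib (2*n+3) : ℝ)) - phi ^ (-(2*(n:ℤ)+2))) (((Nat.fib (2*n+3) : ℝ)) - phi ^ (2*(n:ℤ)+2)) ((-(2*(n:ℤ)+2))+2) (-1) ((-(2*(n:ℤ)+2))+1)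
      · exact eq_mul_inv_of phi_ne_zero (IdD_phi n)
      · exact eq_mul_inv_of psi_ne_zero (IdD_psi n)
      · ring
    have ev4 : (ESet ((Nat.fib (2*n+3) : ℝ)) ((Nat.fib (2*n+3) : ℝ)) (-(2*(n:ℤ)+2))).ncard = (RSet (((Nat.fib (2*n+3) : ℝ)) - phi ^ (-(2*(n:ℤ)+2))) (((Nat.fib (2*n+3) : ℝ)) - phi ^ (2*(n:ℤ)+2)) ((-(2*(n:ℤ)+2))+1)).ncard := by
      exact ncard_peel_E ((Nat.fib (2*n+3) : ℝ)) ((Nat.fib (2*n+3) : ℝ)) (((Nat.fib (2*n+3) : ℝ)) - phi ^ (-(2*(n:ℤ)+2))) (((Nat.fib (2*n+3) : ℝ)) - phi ^ (2*(n:ℤ)+2)) (-(2*(n:ℤ)+2)) (by ring) (by rw [psi_at0 (epar n)])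
    have even : (ESet ((Nat.fib (2*n+4) : ℝ)) ((Nat.fib (2*n+4) : ℝ)) (-(2*(n:ℤ)+2))).ncard = Nat.fib (2*n+3) := by
      rw [ev1, ev2, ev3, ← ev4, odd]
    exact ⟨odd, wcount, even⟩

-- ================= canonical representations =================
def NoAdj (S : Finset ℤ) : Prop := ∀ i ∈ S, i + 1 ∉ S

lemma noadj_sum_lt (T : Finset ℤ) : ∀ M : ℤ, (∀ i ∈ T, i ≤ M) → NoAdj T →
    ∑ i ∈ T, phi ^ i < phi ^ (M + 1) := by
  induction T using Finset.strongInduction with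
  | _ T ih =>
    intro M hM hna
    rcases T.eq_empty_or_nonempty with rfl | hne
    · simpa using phi_zpow_pos (M + 1)
    · set m := T.max' hne with hm
      have hmem : m ∈ T := T.max'_mem hne
      have hmM : m ≤ M := hM m hmem
      have hsub : T.erase m ⊂ T := Finset.erase_ssubset hmem
      have hb : ∀ i ∈ T.erase m, i ≤ m - 2 := by
        intro i hi
        have h1 := Finset.mem_erase.mp hi
        have h2 := T.le_max' i h1.2
        have h3 : i ≠ m - 1 := by
          rintro rfl
          exact hna (m-1) h1.2 (by rw [show m-1+1 = m by ring]; exact hmem)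
        omega
      have hna' : NoAdj (T.erase m) := fun i hi h =>
        hna i (Finset.mem_erase.mp hi).2 (Finset.mem_erase.mp h).2
      have hrec := ih (T.erase m) hsub (m - 2) hb hna'
      have hsum : ∑ i ∈ T.erase m, phi ^ i + phi ^ m = ∑ i ∈ T, phi ^ i :=
        Finset.sum_erase_add T _ hmem
      have hstep : phi ^ (m + 1) = phi ^ m + phi ^ (m - 1) := by
        have := phi_zpow_step (m - 1)
        rw [show m-1+2 = m+1 by ring, show m-1+1 = m by ring] at this
        exact this
      have h4 : phi ^ (m - 2 + 1) = phi ^ (m - 1) := by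
        rw [show m-2+1 = m-1 by ring]
      calc ∑ i ∈ T, phi ^ i = ∑ i ∈ T.erase m, phi ^ i + phi ^ m := hsum.symm
        _ < phi ^ (m - 2 + 1) + phi ^ m := by linarith
        _ = phi ^ (m + 1) := by rw [h4]; linarith [hstep]
        _ ≤ phi ^ (M + 1) := phi_zpow_mono (by omega)

lemma canon_unique : ∀ (c : ℕ) (S T : Finset ℤ), S.card = c → NoAdj S → NoAdj T →
    (∑ i ∈ S, phi ^ i) = (∑ i ∈ T, phi ^ i) → S = T := by
  intro c
  induction c using Nat.strong_induction_on with
  | _ c ih =>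
    intro S T hc hS hT hsum
    rcases S.eq_empty_or_nonempty with rfl | hSne
    · rcases T.eq_empty_or_nonempty with rfl | hTne
      · rfl
      · exfalso
        have := phi_sum_pos hTne
        rw [← hsum] at this
        simp at this
    · rcases T.eq_empty_or_nonempty with rfl | hTne
      · exfalso
        have := phi_sum_pos hSne
        rw [hsum] at this
        simp at this
      · set mS := S.max' hSne with hmS
        set mT := T.max' hTne with hmT
        have hSle : phi ^ mS ≤ ∑ i ∈ S, phi ^ i := phi_single_le_sum (S.max'_mem hSne)
        have hTle : phi ^ mT ≤ ∑ i ∈ T, phi ^ i := phi_single_le_sum (T.max'_mem hTne)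
        have hSlt : ∑ i ∈ S, phi ^ i < phi ^ (mS + 1) :=
          noadj_sum_lt S mS (fun i hi => S.le_max' i hi) hS
        have hTlt : ∑ i ∈ T, phi ^ i < phi ^ (mT + 1) :=
          noadj_sum_lt T mT (fun i hi => T.le_max' i hi) hT
        have hST : mS = mT := by
          have h1 : phi ^ mS < phi ^ (mT + 1) := by rw [hsum] at hSle; linarith
          have h2 : phi ^ mT < phi ^ (mS + 1) := by rw [← hsum] at hTle; linarith
          have := phi_zpow_lt_iff.mp h1
          have := phi_zpow_lt_iff.mp h2
          omega
        have hm : mT ∈ S := hST ▸ S.max'_mem hSne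
        have hcard : (S.erase mT).card < c := by
          rw [← hc]
          exact Finset.card_erase_lt_of_mem hm
        have hmT' : mT ∈ T := T.max'_mem hTne
        have hsum' : (∑ i ∈ S.erase mT, phi ^ i) = ∑ i ∈ T.erase mT, phi ^ i := by
          have h1 := Finset.sum_erase_add S (fun i => phi ^ i) hm
          have h2 := Finset.sum_erase_add T (fun i => phi ^ i) hmT'
          linarith [hsum]
        have hS' : NoAdj (S.erase mT) := fun i hi h =>
          hS i (Finset.mem_erase.mp hi).2 (Finset.mem_erase.mp h).2
        have hT' : NoAdj (T.erase mT) := fun i hi h =>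
          hT i (Finset.mem_erase.mp hi).2 (Finset.mem_erase.mp h).2
        have heq := ih _ hcard (S.erase mT) (T.erase mT) rfl hS' hT' hsum'
        have e1 : insert mT (S.erase mT) = S := Finset.insert_erase hm
        have e2 : insert mT (T.erase mT) = T := Finset.insert_erase hmT'
        rw [← e1, ← e2, heq]

def cOdd : ℕ → Finset ℤ
  | 0 => {0}
  | n+1 => insert (-(2*(n:ℤ))-2) (insert (-(2*(n:ℤ))+1)
      (((cOdd n).erase (-(2*(n:ℤ)))).image (· + 2)))

def cEven : ℕ → Finset ℤ
  | 0 => {0}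
  | n+1 => insert (-(2*(n:ℤ))-2) ((cEven n).image (· + 2))

lemma cOdd_lb (n : ℕ) : ∀ i ∈ cOdd n, -(2*(n:ℤ)) ≤ i := by
  induction n with
  | zero => intro i hi; simp [cOdd] at hi; omega
  | succ n ih =>
    intro i hi
    rw [cOdd] at hi
    rcases Finset.mem_insert.mp hi with rfl | hi
    · push_cast; omega
    rcases Finset.mem_insert.mp hi with rfl | hi
    · push_cast; omega
    · obtain ⟨x, hx, rfl⟩ := Finset.mem_image.mp hi
      have := ih x (Finset.mem_erase.mp hx).2
      push_cast
      omega

lemma cOdd_mem (n : ℕ) : -(2*(n:ℤ)) ∈ cOdd n := by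
  cases n with
  | zero => simp [cOdd]
  | succ n =>
    rw [cOdd]
    apply Finset.mem_insert.mpr
    left
    push_cast
    ring

lemma cOdd_second (n : ℕ) : ∀ i ∈ cOdd n, i ≠ -(2*(n:ℤ)) → -(2*(n:ℤ))+3 ≤ i := by
  induction n with
  | zero => intro i hi hne; simp [cOdd] at hi; omega
  | succ n ih =>
    intro i hi hne
    rw [cOdd] at hi
    rcases Finset.mem_insert.mp hi with rfl | hi
    · exfalso; apply hne; push_cast; ring
    rcases Finset.mem_insert.mp hi with rfl | hi
    · push_cast; omega
    · obtain ⟨x, hx, rfl⟩ := Finset.mem_image.mp hi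
      obtain ⟨hxne, hxmem⟩ := Finset.mem_erase.mp hx
      have := ih x hxmem hxne
      push_cast
      omega

lemma cOdd_noadj (n : ℕ) : NoAdj (cOdd n) := by
  induction n with
  | zero => intro i hi h; simp [cOdd] at hi h; omega
  | succ n ih =>
    intro i hi h
    rw [cOdd] at hi h
    have lb := cOdd_lb n
    have sec := cOdd_second n
    rcases Finset.mem_insert.mp h with h1 | h'
    · -- i+1 = -(2n)-2
      rcases Finset.mem_insert.mp hi with h2 | hi'
      · omega
      rcases Finset.mem_insert.mp hi' with h2 | hi''
      · omega
      · obtain ⟨x, hx, hx2⟩ := Finset.mem_image.mp hi''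
        have := lb x (Finset.mem_erase.mp hx).2
        omega
    rcases Finset.mem_insert.mp h' with h1 | h''
    · -- i+1 = -(2n)+1
      rcases Finset.mem_insert.mp hi with h2 | hi'
      · omega
      rcases Finset.mem_insert.mp hi' with h2 | hi''
      · omega
      · obtain ⟨x, hx, hx2⟩ := Finset.mem_image.mp hi''
        obtain ⟨hxne, hxmem⟩ := Finset.mem_erase.mp hx
        have := sec x hxmem hxne
        omega
    · -- i+1 ∈ image
      obtain ⟨y, hy, hy2⟩ := Finset.mem_image.mp h''
      obtain ⟨hyne, hymem⟩ := Finset.mem_erase.mp hy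
      rcases Finset.mem_insert.mp hi with h2 | hi'
      · have := lb y hymem; omega
      rcases Finset.mem_insert.mp hi' with h2 | hi''
      · have := sec y hymem hyne; omega
      · obtain ⟨x, hx, hx2⟩ := Finset.mem_image.mp hi''
        obtain ⟨hxne, hxmem⟩ := Finset.mem_erase.mp hx
        have hyx : y = x + 1 := by omega
        exact ih x hxmem (by rw [← hyx]; exact hymem)

lemma cOdd_sum (n : ℕ) : ∑ i ∈ cOdd n, phi ^ i = Nat.fib (2*n+1) := by
  induction n with
  | zero => simp [cOdd]
  | succ n ih =>
    have lb := cOdd_lb n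
    have hnotin1 : (-(2*(n:ℤ))+1) ∉ ((cOdd n).erase (-(2*(n:ℤ)))).image (· + 2) := by
      intro h
      obtain ⟨x, hx, hx2⟩ := Finset.mem_image.mp h
      obtain ⟨hxne, hxmem⟩ := Finset.mem_erase.mp hx
      have := lb x hxmem
      omega
    have hnotin2 : (-(2*(n:ℤ))-2) ∉ insert (-(2*(n:ℤ))+1)
        (((cOdd n).erase (-(2*(n:ℤ)))).image (· + 2)) := by
      intro h
      rcases Finset.mem_insert.mp h with h1 | h1
      · omega
      · obtain ⟨x, hx, hx2⟩ := Finset.mem_image.mp h1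
        have := lb x (Finset.mem_erase.mp hx).2
        omega
    rw [cOdd, Finset.sum_insert hnotin2, Finset.sum_insert hnotin1,
      Finset.sum_image (fun a _ b _ h => by omega)]
    have himg : ∑ x ∈ (cOdd n).erase (-(2*(n:ℤ))), phi ^ (x + 2)
        = (∑ x ∈ (cOdd n).erase (-(2*(n:ℤ))), phi ^ x) * phi ^ (2:ℤ) := by
      rw [Finset.sum_mul]
      exact Finset.sum_congr rfl fun i _ => phi_zpow_add i 2
    have herase : ∑ x ∈ (cOdd n).erase (-(2*(n:ℤ))), phi ^ x
        = (Nat.fib (2*n+1) : ℝ) - phi ^ (-(2*(n:ℤ))) := by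
      have := Finset.sum_erase_add (cOdd n) (fun i => phi ^ i) (cOdd_mem n)
      rw [← ih]
      linarith
    rw [himg, herase]
    have key := key_M2_phi n
    have s1 := stepAt (-(2*(n:ℤ))-2) (-(2*(n:ℤ))-1) (-(2*(n:ℤ))) (by ring) (by ring)
    have s2 := stepAt (-(2*(n:ℤ))) (-(2*(n:ℤ))+1) (-(2*(n:ℤ))+2) (by ring) (by ring)
    have p := prodAt (-(2*(n:ℤ))) 2 (-(2*(n:ℤ))+2) (by ring)
    rw [show 2*(n+1)+1 = 2*n+3 by ring]
    have e1 : (-(2*((n:ℕ)+1):ℤ)) = -(2*(n:ℤ))-2 := by push_cast; ring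
    have hkey2 : phi ^ (-(2*(n:ℤ)+2)+1) = phi ^ (-(2*(n:ℤ))-1) := by
      rw [show (-(2*(n:ℤ)+2)+1 : ℤ) = -(2*(n:ℤ))-1 by ring]
    rw [hkey2] at key
    linear_combination - p - key - s2 - s1

lemma cEven_lb (n : ℕ) : ∀ i ∈ cEven n, -(2*(n:ℤ)) ≤ i := by
  induction n with
  | zero => intro i hi; simp [cEven] at hi; omega
  | succ n ih =>
    intro i hi
    rw [cEven] at hi
    rcases Finset.mem_insert.mp hi with rfl | hi
    · push_cast; omega
    · obtain ⟨x, hx, rfl⟩ := Finset.mem_image.mp hi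
      have := ih x hx
      push_cast
      omega

lemma cEven_mem (n : ℕ) : -(2*(n:ℤ)) ∈ cEven n := by
  cases n with
  | zero => simp [cEven]
  | succ n =>
    rw [cEven]
    apply Finset.mem_insert.mpr
    left
    push_cast
    ring

lemma cEven_noadj (n : ℕ) : NoAdj (cEven n) := by
  induction n with
  | zero => intro i hi h; simp [cEven] at hi h; omega
  | succ n ih =>
    intro i hi h
    rw [cEven] at hi h
    have lb := cEven_lb n
    rcases Finset.mem_insert.mp h with h1 | h'
    · rcases Finset.mem_insert.mp hi with h2 | hi'
      · omega
      · obtain ⟨x, hx, hx2⟩ := Finset.mem_image.mp hi'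
        have := lb x hx
        omega
    · obtain ⟨y, hy, hy2⟩ := Finset.mem_image.mp h'
      rcases Finset.mem_insert.mp hi with h2 | hi'
      · have := lb y hy; omega
      · obtain ⟨x, hx, hx2⟩ := Finset.mem_image.mp hi'
        have hyx : y = x + 1 := by omega
        exact ih x hx (by rw [← hyx]; exact hy)

lemma key_M2_phi_even (n : ℕ) :
    (Nat.fib (2*n+4) : ℝ) = phi ^ (2:ℤ) * Nat.fib (2*n+2) + phi ^ (-(2*(n:ℤ))-2) := by
  have h := fib_root_M2 phi_sq phi_add_psi (2*n+2)
  have h2 : psi ^ (2*n+2 : ℕ) = phi ^ (-(2*(n:ℤ))-2) := by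
    rw [← zpow_natCast psi (2*n+2), psi_zpow_even ⟨(n:ℤ)+1, by push_cast; ring⟩,
      show (-((2*n+2:ℕ):ℤ)) = -(2*(n:ℤ))-2 by push_cast; ring]
  rw [show 2*n+4 = (2*n+2)+2 by ring, h, h2, phi_pow_two_cast]

lemma cEven_sum (n : ℕ) : ∑ i ∈ cEven n, phi ^ i = Nat.fib (2*n+2) := by
  induction n with
  | zero => norm_num [cEven, Nat.fib]
  | succ n ih =>
    have lb := cEven_lb n
    have hnotin : (-(2*(n:ℤ))-2) ∉ (cEven n).image (· + 2) := by
      intro h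
      obtain ⟨x, hx, hx2⟩ := Finset.mem_image.mp h
      have := lb x hx
      omega
    rw [cEven, Finset.sum_insert hnotin,
      Finset.sum_image (fun a _ b _ h => by omega)]
    have himg : ∑ x ∈ cEven n, phi ^ (x + 2)
        = (∑ x ∈ cEven n, phi ^ x) * phi ^ (2:ℤ) := by
      rw [Finset.sum_mul]
      exact Finset.sum_congr rfl fun i _ => phi_zpow_add i 2
    rw [himg, ih, show 2*(n+1)+2 = 2*n+4 by ring]
    have key := key_M2_phi_even n
    linarith

-- ============ connecting to the problem statement ============

lemma supp_sum {m : ℕ} {a : ℤ →₀ ℕ} (h : IsCanonRep (m:ℝ) a) :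
    ∑ i ∈ a.support, phi ^ i = (m:ℝ) := by
  rw [h.1.2]
  apply Finset.sum_congr rfl
  intro i hi
  have hne := Finsupp.mem_support_iff.mp hi
  have hle := h.1.1 i
  have h1 : a i = 1 := by omega
  rw [h1]
  norm_num

lemma supp_noadj {v : ℝ} {a : ℤ →₀ ℕ} (h : IsCanonRep v a) : NoAdj a.support := by
  intro i hi hi1
  have hz := h.2 i
  have h1 := Finsupp.mem_support_iff.mp hi
  have h2 := Finsupp.mem_support_iff.mp hi1
  rcases Nat.mul_eq_zero.mp hz with h3 | h3 <;> contradiction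

lemma natural_to_E (d : ℕ → ℤ →₀ ℕ) (m : ℕ) (n : ℕ)
    (hdm : d m (-(2*(n:ℤ))) ≠ 0) (hdlb : ∀ i : ℤ, d m i ≠ 0 → -(2*(n:ℤ)) ≤ i) :
    Set.BijOn Finsupp.support (naturalSet d m) (ESet (m:ℝ) (m:ℝ) (-(2*(n:ℤ)))) := by
  constructor
  · -- mapsTo
    rintro a ⟨⟨hle, hsum⟩, j, ⟨haj, hamin⟩, ⟨hdj, hdmin⟩⟩
    have hj : j = -(2*(n:ℤ)) := le_antisymm (hdmin _ hdm) (hdlb j hdj)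
    subst hj
    have hsum' : ∑ i ∈ a.support, phi ^ i = (m:ℝ) := by
      rw [hsum]
      apply Finset.sum_congr rfl
      intro i hi
      have hne := Finsupp.mem_support_iff.mp hi
      have := hle i
      have h1 : a i = 1 := by omega
      rw [h1]; norm_num
    refine ⟨⟨?_, hsum', ?_⟩, ?_⟩
    · intro i hi
      exact hamin i (Finsupp.mem_support_iff.mp hi)
    · have := sum_psi_of_sum_phi a.support (m:ℚ) (by rw [hsum']; norm_num)
      rw [this]; norm_num
    · exact Finsupp.mem_support_iff.mpr haj
  constructor
  · -- injOn
    rintro a ha b hb hab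
    obtain ⟨⟨hlea, _⟩, _⟩ := ha
    obtain ⟨⟨hleb, _⟩, _⟩ := hb
    ext i
    by_cases hi : i ∈ a.support
    · have hi' : i ∈ b.support := hab ▸ hi
      have h1 := Finsupp.mem_support_iff.mp hi
      have h2 := Finsupp.mem_support_iff.mp hi'
      have := hlea i; have := hleb i
      omega
    · have hi' : i ∉ b.support := hab ▸ hi
      have h1 := Finsupp.notMem_support_iff.mp hi
      have h2 := Finsupp.notMem_support_iff.mp hi'
      rw [h1, h2]
  · -- surjOn
    rintro S ⟨⟨hb, hφ, _⟩, hmem⟩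
    classical
    set a : ℤ →₀ ℕ := Finsupp.indicator S (fun _ _ => 1) with ha
    have hsupp : a.support = S := by
      ext i
      rw [Finsupp.mem_support_iff, ha, Finsupp.indicator_apply]
      by_cases hi : i ∈ S <;> simp [hi]
    have happ : ∀ i ∈ S, a i = 1 := by
      intro i hi
      rw [ha, Finsupp.indicator_apply, dif_pos hi]
    have happ' : ∀ i, i ∉ S → a i = 0 := by
      intro i hi
      rw [ha, Finsupp.indicator_apply, dif_neg hi]
    refine ⟨a, ⟨⟨?_, ?_⟩, -(2*(n:ℤ)), ⟨?_, ?_⟩, hdm, hdlb⟩, hsupp⟩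
    · intro i
      by_cases hi : i ∈ S
      · rw [happ i hi]
      · rw [happ' i hi]; omega
    · rw [hsupp, ← hφ]
      apply Finset.sum_congr rfl
      intro i hi
      rw [happ i hi]
      norm_num
    · rw [happ _ hmem]; omega
    · intro i hi
      by_cases h : i ∈ S
      · exact hb i h
      · exact absurd (happ' i h) hi

/-- For `n ≥ 0`, the sets of natural expansions of `F_{2n+1}` and of `F_{2n+2}` are
finite and `ν(F_{2n+1}) = ν(F_{2n+2}) = F_{2n+1}`. Here `d n` denotes the canonical
φ-representation of `n`. -/
theorem natural_count_fib
    (d : ℕ → ℤ →₀ ℕ) (hd : ∀ n : ℕ, IsCanonRep n (d n)) (n : ℕ) :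
    (naturalSet d (Nat.fib (2 * n + 1))).Finite ∧
      (naturalSet d (Nat.fib (2 * n + 2))).Finite ∧
      (naturalSet d (Nat.fib (2 * n + 1))).ncard = Nat.fib (2 * n + 1) ∧
      (naturalSet d (Nat.fib (2 * n + 2))).ncard = Nat.fib (2 * n + 1) := by
  have h1 := hd (Nat.fib (2*n+1))
  have h2 := hd (Nat.fib (2*n+2))
  have hs1 : (d (Nat.fib (2*n+1))).support = cOdd n :=
    canon_unique _ _ _ rfl (supp_noadj h1) (cOdd_noadj n)
      (by rw [supp_sum h1, cOdd_sum n])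
  have hs2 : (d (Nat.fib (2*n+2))).support = cEven n :=
    canon_unique _ _ _ rfl (supp_noadj h2) (cEven_noadj n)
      (by rw [supp_sum h2, cEven_sum n])
  have hdm1 : d (Nat.fib (2*n+1)) (-(2*(n:ℤ))) ≠ 0 := by
    rw [← Finsupp.mem_support_iff, hs1]
    exact cOdd_mem n
  have hdlb1 : ∀ i : ℤ, d (Nat.fib (2*n+1)) i ≠ 0 → -(2*(n:ℤ)) ≤ i := by
    intro i hi
    exact cOdd_lb n i (hs1 ▸ Finsupp.mem_support_iff.mpr hi)
  have hdm2 : d (Nat.fib (2*n+2)) (-(2*(n:ℤ))) ≠ 0 := by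
    rw [← Finsupp.mem_support_iff, hs2]
    exact cEven_mem n
  have hdlb2 : ∀ i : ℤ, d (Nat.fib (2*n+2)) i ≠ 0 → -(2*(n:ℤ)) ≤ i := by
    intro i hi
    exact cEven_lb n i (hs2 ▸ Finsupp.mem_support_iff.mpr hi)
  have b1 := natural_to_E d (Nat.fib (2*n+1)) n hdm1 hdlb1
  have b2 := natural_to_E d (Nat.fib (2*n+2)) n hdm2 hdlb2
  have hE1 := ESet_finite ((Nat.fib (2*n+1) : ℝ)) ((Nat.fib (2*n+1) : ℝ)) (-(2*(n:ℤ)))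
  have hE2 := ESet_finite ((Nat.fib (2*n+2) : ℝ)) ((Nat.fib (2*n+2) : ℝ)) (-(2*(n:ℤ)))
  have hfin1 : (naturalSet d (Nat.fib (2*n+1))).Finite := by
    apply Set.Finite.of_finite_image _ b1.injOn
    rw [b1.image_eq]
    exact hE1
  have hfin2 : (naturalSet d (Nat.fib (2*n+2))).Finite := by
    apply Set.Finite.of_finite_image _ b2.injOn
    rw [b2.image_eq]
    exact hE2
  obtain ⟨c1, _, c2⟩ := count_main n
  refine ⟨hfin1, hfin2, ?_, ?_⟩
  · calc (naturalSet d (Nat.fib (2*n+1))).ncard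
        = (Finsupp.support '' naturalSet d (Nat.fib (2*n+1))).ncard :=
          (Set.ncard_image_of_injOn b1.injOn).symm
      _ = (ESet ((Nat.fib (2*n+1):ℝ)) ((Nat.fib (2*n+1):ℝ)) (-(2*(n:ℤ)))).ncard := by
          rw [b1.image_eq]
      _ = Nat.fib (2*n+1) := c1
  · calc (naturalSet d (Nat.fib (2*n+2))).ncard
        = (Finsupp.support '' naturalSet d (Nat.fib (2*n+2))).ncard :=
          (Set.ncard_image_of_injOn b2.injOn).symm
      _ = (ESet ((Nat.fib (2*n+2):ℝ)) ((Nat.fib (2*n+2):ℝ)) (-(2*(n:ℤ)))).ncard := by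
          rw [b2.image_eq]
      _ = Nat.fib (2*n+1) := c2
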